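/- arXiv:math/0305035 — 6 statements merged into one kernel-verified Lean document; each statement's English description precedes it below -/
import Mathlib

section
/- Let p be a prime, G a finite p-group, and χ an irreducible complex character of G. Suppose Z and Y are subgroups of G with Z < Y, Y normal in G, and the index |Y : Z| = p. If Z ≤ Z(χ) and Y is not contained in Z(χ), then χ vanishes on Y \ Z, i.e., χ(y) = 0 for all y ∈ Y with y ∉ Z. -/
open scoped ComplexOrder

/-- `χ` is the character of some finite-dimensional complex representation of `G`. -/
def IsChar (G : Type) [Group G] (χ : G → ℂ) : Prop :=
  ∃ V : FDRep ℂ G, V.character = χ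

/-- `χ` is an irreducible complex character of `G`, i.e. the character of some
simple finite-dimensional complex representation of `G`. -/
def IsIrrChar (G : Type) [Group G] (χ : G → ℂ) : Prop :=
  ∃ V : FDRep ℂ G, CategoryTheory.Simple V ∧ V.character = χ

/-- The standard inner product of complex class functions on a finite group. -/
noncomputable def charInner (G : Type) [Group G] [Fintype G] (f h : G → ℂ) : ℂ :=
  (Fintype.card G : ℂ)⁻¹ * ∑ g : G, f g * starRingEnd ℂ (h g)

/-- `η(χ,ψ)`: the number of distinct irreducible characters occurring as
constituents of the product character `χψ`. -/
noncomputable def eta (G : Type) [Group G] [Fintype G] (χ ψ : G → ℂ) : ℕ :=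
  {θ : G → ℂ | IsIrrChar G θ ∧ 0 < charInner G (fun g => χ g * ψ g) θ}.ncard

/-- A character is faithful if its kernel `{g | χ g = χ 1}` is trivial. -/
def IsFaithfulChar (G : Type) [Group G] (χ : G → ℂ) : Prop :=
  ∀ g : G, χ g = χ 1 → g = 1

/-- The center `Z(χ) = {g | |χ(g)| = χ(1)}` of a character. -/
def charCenter (G : Type) [Group G] (χ : G → ℂ) : Set G :=
  {g | ((‖χ g‖ : ℝ) : ℂ) = χ 1}


open Module LinearMap Finset Complex CategoryTheory MulAction

section AuxScalar

variable {W : Type} [AddCommGroup W] [Module ℂ W] [FiniteDimensional ℂ W]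

lemma idem_trace_nat {P : Module.End ℂ W} (hP : P * P = P) :
    ∃ r : ℕ, LinearMap.trace ℂ W P = r ∧ (r = 0 → P = 0) := by
  obtain ⟨q, hq⟩ := (LinearMap.isProj_iff_isIdempotentElem P).2 hP
  refine ⟨finrank ℂ q, hq.trace, fun hr => ?_⟩
  have hqbot : q = ⊥ := Submodule.finrank_eq_zero.1 hr
  ext x
  have := hq.map_mem x
  rw [hqbot, Submodule.mem_bot] at this
  simpa using this

lemma scalar_of_abs_trace (A : Module.End ℂ W) {m : ℕ} (hm : 0 < m) (hA : A ^ m = 1)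
    (hn : 0 < finrank ℂ W)
    (habs : ‖LinearMap.trace ℂ W A‖ = finrank ℂ W) :
    ∃ c : ℂ, ‖c‖ = 1 ∧ A = c • (1 : Module.End ℂ W) := by
  set n := finrank ℂ W with hn'
  set ζ : ℂ := Complex.exp (2 * Real.pi * Complex.I / m) with hζdef
  have hζ : IsPrimitiveRoot ζ m := Complex.isPrimitiveRoot_exp m hm.ne'
  have hζm : ζ ^ m = 1 := hζ.pow_eq_one
  have hζ0 : ζ ≠ 0 := hζ.ne_zero hm.ne'
  set ξ : ℂ := ζ⁻¹ with hξdef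
  have hξm : ξ ^ m = 1 := by rw [hξdef, inv_pow, hζm, inv_one]
  have hξζ : ξ * ζ = 1 := inv_mul_cancel₀ hζ0
  -- the projections
  set P : ℕ → Module.End ℂ W := fun j => (m : ℂ)⁻¹ • ∑ k ∈ range m, ξ ^ (j * k) • A ^ k with hPdef
  have hmC : (m : ℂ) ≠ 0 := Nat.cast_ne_zero.2 hm.ne'
  -- A * P j = ζ ^ j • P j
  have hAP : ∀ j, A * P j = ζ ^ j • P j := by
    intro j
    have key : ∑ k ∈ range m, ξ ^ (j * (k+1)) • A ^ (k+1) = ∑ k ∈ range m, ξ ^ (j * k) • A ^ k := by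
      have h1 : ∑ k ∈ range (m+1), ξ ^ (j * k) • A ^ k
          = ∑ k ∈ range m, ξ ^ (j * (k+1)) • A ^ (k+1) + ξ ^ (j * 0) • A ^ 0 :=
        Finset.sum_range_succ' _ m
      have h2 : ∑ k ∈ range (m+1), ξ ^ (j * k) • A ^ k
          = ∑ k ∈ range m, ξ ^ (j * k) • A ^ k + ξ ^ (j * m) • A ^ m :=
        Finset.sum_range_succ _ m
      have h3 : ξ ^ (j * m) • A ^ m = ξ ^ (j * 0) • A ^ 0 := by
        rw [hA, mul_zero, pow_zero, pow_zero, mul_comm j m, pow_mul, hξm, one_pow]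
      rw [h3] at h2
      have := h1.symm.trans h2
      exact add_right_cancel this
    have hζξj : ζ ^ j * ξ ^ j = 1 := by rw [← mul_pow, mul_comm ζ ξ, hξζ, one_pow]
    have expand : A * P j = (m : ℂ)⁻¹ • ∑ k ∈ range m, ξ ^ (j * k) • A ^ (k+1) := by
      rw [hPdef]
      rw [mul_smul_comm, Finset.mul_sum]
      congr 1
      refine Finset.sum_congr rfl fun k _ => ?_
      rw [mul_smul_comm, ← pow_succ']
    have main : ∑ k ∈ range m, ξ ^ (j * k) • A ^ (k+1)
        = ζ ^ j • ∑ k ∈ range m, ξ ^ (j * k) • A ^ k := by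
      rw [← key, Finset.smul_sum]
      refine Finset.sum_congr rfl fun k _ => ?_
      rw [smul_smul]
      congr 1
      rw [mul_add, mul_one, pow_add, ← mul_assoc,
        mul_comm (ζ ^ j) (ξ ^ (j*k)), mul_assoc, hζξj, mul_one]
    rw [expand, main, hPdef, smul_smul, smul_smul, mul_comm]
  -- powers
  have hAkP : ∀ j k, A ^ k * P j = ζ ^ (j * k) • P j := by
    intro j k
    induction k with
    | zero => simp
    | succ k ih =>
      rw [pow_succ, mul_assoc, hAP j, mul_smul_comm, ih, smul_smul, ← pow_add]
      congr 2
      ring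
  have hPmul : ∀ j (B : Module.End ℂ W),
      P j * B = (m:ℂ)⁻¹ • ∑ k ∈ range m, ξ ^ (j*k) • (A ^ k * B) := by
    intro j B
    rw [hPdef]
    rw [smul_mul_assoc, Finset.sum_mul]
    simp only [smul_mul_assoc]
  have hcast : ∀ B : Module.End ℂ W, (m:ℂ)⁻¹ • (m • B) = B := by
    intro B
    rw [← Nat.cast_smul_eq_nsmul ℂ m B, smul_smul, inv_mul_cancel₀ hmC, one_smul]
  have hPP : ∀ j, P j * P j = P j := by
    intro j
    rw [hPmul]
    have : ∀ k ∈ range m, ξ ^ (j*k) • (A ^ k * P j) = P j := by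
      intro k _
      rw [hAkP, smul_smul, ← mul_pow, hξζ, one_pow, one_smul]
    rw [Finset.sum_congr rfl this, Finset.sum_const, Finset.card_range]
    exact hcast _
  -- resolution of identity
  have hsumP : ∑ j ∈ range m, P j = 1 := by
    rw [hPdef, ← Finset.smul_sum, Finset.sum_comm]
    have inner : ∀ k ∈ range m, ∑ j ∈ range m, ξ ^ (j*k) • A ^ k
        = (∑ j ∈ range m, (ξ ^ k) ^ j) • A ^ k := by
      intro k _
      rw [Finset.sum_smul]
      refine Finset.sum_congr rfl fun j _ => ?_
      rw [← pow_mul, mul_comm k j]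
    rw [Finset.sum_congr rfl inner]
    have outer : ∑ k ∈ range m, (∑ j ∈ range m, (ξ ^ k) ^ j) • A ^ k
        = (m : ℂ) • (1 : Module.End ℂ W) := by
      rw [Finset.sum_eq_single_of_mem 0 (Finset.mem_range.2 hm)]
      · simp
      · intro k hk hk0
        have hxk : ξ ^ k ≠ 1 := by
          intro h
          have : ζ ^ k = 1 := by
            have := congrArg (· * ζ ^ k) h
            simpa [hξdef, inv_pow, inv_mul_cancel₀ (pow_ne_zero k hζ0)] using this.symm
          exact hζ.pow_ne_one_of_pos_of_lt hk0 (Finset.mem_range.1 hk) this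
        have : ∑ j ∈ range m, (ξ ^ k) ^ j = 0 := by
          rw [geom_sum_eq hxk, ← pow_mul, mul_comm k m, pow_mul, hξm, one_pow, sub_self, zero_div]
        rw [this, zero_smul]
    rw [outer, smul_smul, inv_mul_cancel₀ hmC, one_smul]
  -- traces
  choose r hr hr0 using fun j => idem_trace_nat (hPP j)
  have htr1 : ∑ j ∈ range m, (r j : ℂ) = (n : ℂ) := by
    have := congrArg (LinearMap.trace ℂ W) hsumP
    rw [map_sum, LinearMap.trace_one] at this
    rw [← Finset.sum_congr rfl fun j _ => hr j]
    exact this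
  have hAeq : A = ∑ j ∈ range m, ζ ^ j • P j := by
    have : A = A * ∑ j ∈ range m, P j := by rw [hsumP, mul_one]
    rw [this, Finset.mul_sum]
    exact Finset.sum_congr rfl fun j _ => hAP j
  set T : ℂ := LinearMap.trace ℂ W A with hT
  have htrA : T = ∑ j ∈ range m, ζ ^ j * (r j : ℂ) := by
    rw [hT, hAeq, map_sum]
    refine Finset.sum_congr rfl fun j _ => ?_
    rw [map_smul, hr j, smul_eq_mul]
  -- triangle equality
  have hnR : (0:ℝ) < n := Nat.cast_pos.2 hn
  have hnC : (n : ℂ) ≠ 0 := Nat.cast_ne_zero.2 hn.ne'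
  set lam : ℂ := T / n with hlam
  have habsl : ‖lam‖ = 1 := by
    rw [hlam, norm_div, habs]
    simp [Complex.norm_natCast, hnR.ne']
  have habsz : ‖ζ‖ = 1 := by
    have h1 : ‖ζ‖ ^ m = 1 ^ m := by rw [← norm_pow, hζm, norm_one, one_pow]
    exact (pow_left_inj₀ (norm_nonneg _) zero_le_one hm.ne').1 h1
  have hconj : (starRingEnd ℂ) lam * T = (n : ℂ) := by
    rw [hlam, map_div₀, Complex.conj_natCast, div_mul_eq_mul_div, mul_comm,
      Complex.mul_conj, ← Complex.sq_norm, habs]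
    push_cast
    field_simp
  have hterm : ∀ j, ‖(starRingEnd ℂ) lam * ζ ^ j‖ = 1 := by
    intro j
    rw [norm_mul, norm_pow, habsz, one_pow, mul_one, Complex.norm_conj, habsl]
  have hre : ∀ j, ((starRingEnd ℂ) lam * ζ ^ j).re ≤ 1 := by
    intro j
    calc ((starRingEnd ℂ) lam * ζ ^ j).re ≤ ‖(starRingEnd ℂ) lam * ζ ^ j‖ := Complex.re_le_norm _
    _ = 1 := hterm j
  have hconj' : ∑ j ∈ range m, (starRingEnd ℂ) lam * (ζ ^ j * (r j : ℂ)) = (n : ℂ) := by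
    rw [← Finset.mul_sum, ← htrA]
    exact hconj
  have hsumre : ∑ j ∈ range m, (r j : ℝ) * ((starRingEnd ℂ) lam * ζ ^ j).re = (n : ℝ) := by
    have h := congrArg Complex.re hconj'
    rw [Complex.re_sum] at h
    calc ∑ j ∈ range m, (r j : ℝ) * ((starRingEnd ℂ) lam * ζ ^ j).re
        = ∑ j ∈ range m, ((starRingEnd ℂ) lam * (ζ ^ j * (r j : ℂ))).re := by
          refine Finset.sum_congr rfl fun j _ => ?_
          rw [show (starRingEnd ℂ) lam * (ζ ^ j * (r j : ℂ))
              = ((r j : ℝ) : ℂ) * ((starRingEnd ℂ) lam * ζ ^ j) by push_cast; ring,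
            Complex.re_ofReal_mul]
      _ = (n : ℝ) := by rw [h]; simp
  have hkey : ∀ j ∈ range m, (r j : ℝ) * ((starRingEnd ℂ) lam * ζ ^ j).re = (r j : ℝ) := by
    have hle : ∀ j ∈ range m, (r j : ℝ) * ((starRingEnd ℂ) lam * ζ ^ j).re ≤ (r j : ℝ) := by
      intro j _
      calc (r j : ℝ) * ((starRingEnd ℂ) lam * ζ ^ j).re ≤ (r j : ℝ) * 1 :=
        mul_le_mul_of_nonneg_left (hre j) (Nat.cast_nonneg _)
      _ = _ := mul_one _
    have hsum_eq : ∑ j ∈ range m, (r j : ℝ) * ((starRingEnd ℂ) lam * ζ ^ j).re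
        = ∑ j ∈ range m, (r j : ℝ) := by
      rw [hsumre]
      have : ∑ j ∈ range m, (r j : ℝ) = (n : ℝ) := by
        have h2 := congrArg Complex.re htr1
        rw [Complex.re_sum] at h2
        simpa using h2
      rw [this]
    exact fun j hj => (Finset.sum_eq_sum_iff_of_le hle).1 hsum_eq j hj
  have hzeta_eq : ∀ j ∈ range m, r j ≠ 0 → ζ ^ j = lam := by
    intro j hj hrj
    have hrR : (r j : ℝ) ≠ 0 := Nat.cast_ne_zero.2 hrj
    have h1 : ((starRingEnd ℂ) lam * ζ ^ j).re = 1 :=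
      mul_left_cancel₀ hrR ((hkey j hj).trans (mul_one _).symm)
    set z := (starRingEnd ℂ) lam * ζ ^ j with hz
    have hzim : z.im = 0 := by
      have h2 : Complex.normSq z = 1 := by
        rw [← Complex.sq_norm, hterm j, one_pow]
      have := Complex.normSq_apply z
      nlinarith [h2, h1, this]
    have hz1 : z = 1 := Complex.ext h1 hzim
    have : lam * z = lam := by rw [hz1, mul_one]
    rw [hz, ← mul_assoc, Complex.mul_conj, ← Complex.sq_norm, habsl] at this
    simpa using this
  refine ⟨lam, habsl, ?_⟩
  rw [hAeq]
  have : ∀ j ∈ range m, ζ ^ j • P j = lam • P j := by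
    intro j hj
    by_cases hrj : r j = 0
    · rw [hr0 j hrj, smul_zero, smul_zero]
    · rw [hzeta_eq j hj hrj]
  rw [Finset.sum_congr rfl this, ← Finset.smul_sum, hsumP]

end AuxScalar

section Rep
variable {G : Type} [Group G] [Fintype G]

lemma finrank_pos_of_simple (V : FDRep ℂ G) [Simple V] : 0 < finrank ℂ V := by
  rcases Nat.eq_zero_or_pos (finrank ℂ V) with h0 | h
  · have hsub : Subsingleton V := Module.finrank_zero_iff.1 h0
    exact absurd (Action.hom_ext _ _ (InducedCategory.hom_ext (ModuleCat.hom_ext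
      (LinearMap.ext fun v => @Subsingleton.elim _ hsub _ _))))
      (CategoryTheory.id_nonzero V)
  · exact h

lemma char_pow_eq_one (V : FDRep ℂ G) (g : G) :
    (V.ρ g) ^ (Fintype.card G) = 1 := by
  rw [← map_pow, pow_card_eq_one, map_one]

lemma abs_char_iff (V : FDRep ℂ G) (hn : 0 < finrank ℂ V) (g : G) :
    ((‖V.character g‖ : ℝ) : ℂ) = V.character 1 ↔
      ∃ c : ℂ, ‖c‖ = 1 ∧ V.ρ g = c • (1 : Module.End ℂ V) := by
  rw [FDRep.char_one]
  constructor
  · intro h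
    have h' : ‖V.character g‖ = (finrank ℂ V : ℝ) := by exact_mod_cast h
    exact scalar_of_abs_trace (V.ρ g) Fintype.card_pos (char_pow_eq_one V g) hn h'
  · rintro ⟨c, hc, hρ⟩
    have hch : V.character g = c * finrank ℂ V := by
      rw [FDRep.character, hρ, map_smul, LinearMap.trace_one, smul_eq_mul]
    rw [hch, norm_mul, hc, one_mul]
    simp

/-- elements acting as a scalar of modulus one -/
def scalarSub (V : FDRep ℂ G) : Subgroup G where
  carrier := {g | ∃ c : ℂ, ‖c‖ = 1 ∧ V.ρ g = c • (1 : Module.End ℂ V)}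
  one_mem' := ⟨1, by simp, by simp⟩
  mul_mem' := by
    rintro a b ⟨c, hc, hρc⟩ ⟨d, hd, hρd⟩
    exact ⟨c * d, by rw [norm_mul, hc, hd, mul_one], by
      rw [map_mul, hρc, hρd, smul_mul_assoc, mul_smul_comm, one_mul, smul_smul]⟩
  inv_mem' := by
    rintro a ⟨c, hc, hρ⟩
    have hc0 : c ≠ 0 := by intro h; rw [h] at hc; simp at hc
    refine ⟨c⁻¹, by rw [norm_inv, hc, inv_one], ?_⟩
    have h1 : V.ρ a * V.ρ a⁻¹ = 1 := by rw [← map_mul, mul_inv_cancel, map_one]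
    rw [hρ, smul_mul_assoc, one_mul] at h1
    calc V.ρ a⁻¹ = c⁻¹ • (c • V.ρ a⁻¹) := by rw [smul_smul, inv_mul_cancel₀ hc0, one_smul]
    _ = c⁻¹ • (1 : Module.End ℂ V) := by rw [h1]

lemma scalarSub_normal (V : FDRep ℂ G) : (scalarSub V).Normal := by
  constructor
  rintro a ⟨c, hc, hρ⟩ g
  refine ⟨c, hc, ?_⟩
  rw [map_mul, map_mul, hρ, mul_smul_comm, smul_mul_assoc, mul_one, ← map_mul,
    mul_inv_cancel, map_one]

lemma mem_scalarSub_of_comm (V : FDRep ℂ G) [Simple V] (y : G)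
    (hcomm : ∀ g : G, V.ρ g * V.ρ y = V.ρ y * V.ρ g) : y ∈ scalarSub V := by
  have hn := finrank_pos_of_simple V
  have hnt : Nontrivial V := Module.finrank_pos_iff.1 hn
  let f : V ⟶ V := ⟨InducedCategory.homMk (ModuleCat.ofHom (V.ρ y)), fun g =>
    InducedCategory.hom_ext (ModuleCat.hom_ext (hcomm g).symm)⟩
  obtain ⟨c, hc⟩ := CategoryTheory.endomorphism_simple_eq_smul_id ℂ f
  have hρ : V.ρ y = c • (1 : Module.End ℂ V) := by
    have := congrArg (fun φ : V ⟶ V => φ.hom.hom.hom) hc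
    simp only [Action.smul_hom, Action.id_hom] at this
    exact this.symm
  have h1ne : (1 : Module.End ℂ V) ≠ 0 := by
    obtain ⟨v, hv⟩ := exists_ne (0 : V)
    intro h
    have := congrArg (fun (φ : Module.End ℂ V) => φ v) h
    simp at this
    exact hv this
  have hcm : c ^ (Fintype.card G) = 1 := by
    have hp := char_pow_eq_one V y
    rw [hρ, smul_pow, one_pow] at hp
    have : c ^ (Fintype.card G) • (1 : Module.End ℂ V) = (1:ℂ) • 1 := by
      rw [hp, one_smul]
    exact smul_left_injective ℂ h1ne this
  have habs : ‖c‖ = 1 := by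
    have := congrArg (‖·‖) hcm
    rw [norm_pow, norm_one, ← one_pow (Fintype.card G)] at this
    exact (pow_left_inj₀ (norm_nonneg _) zero_le_one Fintype.card_ne_zero).1 this
  exact ⟨c, habs, hρ⟩

end Rep

lemma conj_comm_mem_of_relindex_p {p : ℕ} (hp : p.Prime) {G : Type} [Group G] [Fintype G]
    (hG : IsPGroup p G) (Z Y : Subgroup G) [hZn : Z.Normal] (hYn : Y.Normal) (hZY : Z ≤ Y)
    (hidx : Z.relIndex Y = p) :
    ∀ (g : G), ∀ y ∈ Y, y⁻¹ * (g * y * g⁻¹) ∈ Z := by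
  haveI : Fact (Nat.Prime p) := ⟨hp⟩
  set Y' : Subgroup (G ⧸ Z) := Y.map (QuotientGroup.mk' Z) with hY'
  haveI hY'n : Y'.Normal := Subgroup.Normal.map hYn _ (QuotientGroup.mk'_surjective Z)
  -- card Y' = p
  have hcard : Nat.card Y' = p := by
    let f : Y →* G ⧸ Z := (QuotientGroup.mk' Z).comp Y.subtype
    have hker : f.ker = Z.subgroupOf Y := by
      ext x
      simp [f, MonoidHom.mem_ker, Subgroup.mem_subgroupOf, QuotientGroup.eq_one_iff]
    have hrange : f.range = Y' := by
      rw [MonoidHom.range_comp, Subgroup.range_subtype]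
    have e1 : Nat.card (Y ⧸ f.ker) = Nat.card f.range :=
      Nat.card_congr (QuotientGroup.quotientKerEquivRange f).toEquiv
    rw [hker, hrange] at e1
    rw [← e1]
    exact hidx
  have hfin : Finite Y' := inferInstance
  -- conjugation action of G ⧸ Z on Y'
  letI : MulAction (G ⧸ Z) Y' := MulAction.compHom Y' (MulAut.conjNormal (H := Y'))
  have hsmul : ∀ (q : G ⧸ Z) (y' : Y'), q • y' = MulAut.conjNormal q y' := fun _ _ => rfl
  have hGq : IsPGroup p (G ⧸ Z) := hG.to_quotient Z
  have hmod := hGq.card_modEq_card_fixedPoints (α := Y')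
  have hone : (1 : Y') ∈ fixedPoints (G ⧸ Z) Y' := by
    intro q
    rw [hsmul, map_one]
  have hpos : 0 < Nat.card (fixedPoints (G ⧸ Z) Y') := by
    have : Finite (fixedPoints (G ⧸ Z) Y') := Subtype.finite
    exact Nat.card_pos_iff.2 ⟨⟨⟨1, hone⟩⟩, this⟩
  have hle : Nat.card (fixedPoints (G ⧸ Z) Y') ≤ p := by
    rw [← hcard]
    rw [Nat.card_coe_set_eq]
    have := Set.ncard_le_ncard (Set.subset_univ (fixedPoints (G ⧸ Z) Y'))
      (Set.finite_univ (α := Y'))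
    rwa [Set.ncard_univ] at this
  have hdvd : p ∣ Nat.card (fixedPoints (G ⧸ Z) Y') := by
    have : Nat.card (fixedPoints (G ⧸ Z) Y') ≡ 0 [MOD p] := by
      calc Nat.card (fixedPoints (G ⧸ Z) Y') ≡ Nat.card Y' [MOD p] := hmod.symm
      _ = p := hcard
      _ ≡ 0 [MOD p] := (Nat.modEq_zero_iff_dvd).2 dvd_rfl
    exact (Nat.modEq_zero_iff_dvd).1 this
  have hall : ∀ y' : Y', y' ∈ fixedPoints (G ⧸ Z) Y' := by
    have hcf : Nat.card (fixedPoints (G ⧸ Z) Y') = p :=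
      le_antisymm hle (Nat.le_of_dvd hpos hdvd)
    have : (fixedPoints (G ⧸ Z) Y') = Set.univ := by
      apply Set.eq_of_subset_of_ncard_le (Set.subset_univ _)
      rw [Set.ncard_univ, ← Nat.card_coe_set_eq, hcf, ← hcard]
    intro y'
    rw [this]
    trivial
  intro g y hy
  have hy' : (QuotientGroup.mk y : G ⧸ Z) ∈ Y' := ⟨y, hy, rfl⟩
  have := hall ⟨QuotientGroup.mk y, hy'⟩ (QuotientGroup.mk g)
  rw [hsmul] at this
  have hcoe := congrArg (Subtype.val) this
  rw [MulAut.conjNormal_apply] at hcoe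
  have : (QuotientGroup.mk (g * y * g⁻¹) : G ⧸ Z) = QuotientGroup.mk y := by
    simpa using hcoe
  have := QuotientGroup.eq.1 this.symm
  simpa [mul_assoc] using this


set_option maxHeartbeats 1000000 in
/-- Lemma 2.2: if Z < Y ≤ G with Y ⊴ G, |Y:Z| = p, Z ≤ Z(χ) and Y ⊄ Z(χ),
then χ vanishes on Y \ Z. -/
theorem stmt6 {p : ℕ} (hp : p.Prime) (G : Type) [Group G] [Fintype G]
    (hG : IsPGroup p G) (χ : G → ℂ) (hχ : IsIrrChar G χ)
    (Z Y : Subgroup G) (hZY : Z < Y) (hY : Y.Normal)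
    (hidx : Z.relIndex Y = p)
    (hZc : (Z : Set G) ⊆ charCenter G χ)
    (hYc : ¬ (Y : Set G) ⊆ charCenter G χ) :
    ∀ y ∈ Y, y ∉ Z → χ y = 0 := by
  obtain ⟨V, hsimple, hchar⟩ := hχ
  haveI := hsimple
  subst hchar
  intro y hyY hyZ
  have hn := finrank_pos_of_simple V
  set W : Subgroup G := scalarSub V ⊓ Y with hW
  have hZle : Z ≤ W := by
    intro z hz
    rw [hW, Subgroup.mem_inf]
    refine ⟨(abs_char_iff V hn z).1 ?_, hZY.le hz⟩
    exact hZc hz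
  have hWle : W ≤ Y := inf_le_right
  have hmul := Subgroup.relIndex_mul_relIndex Z W Y hZle hWle
  rw [hidx] at hmul
  have hYnW : ¬ Y ≤ W := by
    intro hle
    apply hYc
    intro a ha
    have haW : a ∈ W := hle ha
    rw [hW, Subgroup.mem_inf] at haW
    exact (abs_char_iff V hn a).2 haW.1
  have hWZ : W ≤ Z := by
    have hdvd : W.relIndex Y ∣ p := ⟨Z.relIndex W, by rw [mul_comm]; exact hmul.symm⟩
    rcases (hp.eq_one_or_self_of_dvd _ hdvd) with h1 | hps
    · exact absurd (Subgroup.relIndex_eq_one.1 h1) hYnW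
    · rw [hps] at hmul
      have : Z.relIndex W = 1 := by
        have := Nat.eq_of_mul_eq_mul_right hp.pos (hmul.trans (one_mul p).symm)
        exact this
      exact Subgroup.relIndex_eq_one.1 this
  have hZeq : Z = W := le_antisymm hZle hWZ
  haveI hZn : Z.Normal := by
    rw [hZeq, hW]
    constructor
    intro a ha g
    rw [Subgroup.mem_inf] at ha ⊢
    exact ⟨(scalarSub_normal V).conj_mem a ha.1 g, hY.conj_mem a ha.2 g⟩
  by_contra h0
  have hcomm : ∀ g : G, V.ρ g * V.ρ y = V.ρ y * V.ρ g := by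
    intro g
    set z : G := y⁻¹ * (g * y * g⁻¹) with hzdef
    have hz : z ∈ Z := conj_comm_mem_of_relindex_p hp hG Z Y hY hZY.le hidx g y hyY
    have hconj : g * y * g⁻¹ = y * z := by rw [hzdef]; group
    have hzW : z ∈ W := hZeq ▸ hz
    rw [hW, Subgroup.mem_inf] at hzW
    obtain ⟨c, hc, hρz⟩ := hzW.1
    have hchar_eq : V.character y = c * V.character y := by
      conv_lhs => rw [← FDRep.char_conj V y g]
      rw [hconj, FDRep.character, map_mul, hρz, mul_smul_comm, mul_one, map_smul,
        smul_eq_mul]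
      rfl
    have hc1 : c = 1 := by
      have hz0 : (c - 1) * V.character y = 0 := by linear_combination -hchar_eq
      rcases mul_eq_zero.1 hz0 with h | h
      · exact sub_eq_zero.1 h
      · exact absurd h h0
    have hρz1 : V.ρ z = 1 := by rw [hρz, hc1, one_smul]
    have key : V.ρ g * V.ρ y * V.ρ g⁻¹ = V.ρ y := by
      rw [← map_mul, ← map_mul, hconj, map_mul, hρz1, mul_one]
    calc V.ρ g * V.ρ y = (V.ρ g * V.ρ y * V.ρ g⁻¹) * V.ρ g := by
          rw [mul_assoc (V.ρ g * V.ρ y),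
            show V.ρ g⁻¹ * V.ρ g = 1 by rw [← map_mul, inv_mul_cancel, map_one], mul_one]
      _ = V.ρ y * V.ρ g := by rw [key]
  have hymem : y ∈ scalarSub V := mem_scalarSub_of_comm V y hcomm
  have : y ∈ Z := by
    rw [hZeq, hW, Subgroup.mem_inf]
    exact ⟨hymem, hyY⟩
  exact hyZ this
end

section
/- Let G be a finite group with center Z = Z(G), and let χ and ψ be irreducible complex characters of G, both of which vanish on G \ Z. Let λ and μ be the unique linear characters of Z with χ restricted to Z equal to χ(1)·λ and ψ restricted to Z equal to ψ(1)·μ. Then the product character χψ equals the induced character (λμ)^G. -/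
open scoped ComplexOrder

open Classical in
/-- The character of G induced from a class function f on a subgroup H. -/
noncomputable def inducedChar (G : Type) [Group G] [Fintype G] (H : Subgroup G)
    (f : ↥H → ℂ) : G → ℂ :=
  fun g => (Nat.card ↥H : ℂ)⁻¹ *
    ∑ x : G, if h : x⁻¹ * g * x ∈ H then f ⟨x⁻¹ * g * x, h⟩ else 0

lemma aux_orth (G : Type) [Group G] [Fintype G] (V : FDRep ℂ G) [CategoryTheory.Simple V] :
    ∑ g : G, V.character g * V.character g⁻¹ = (Fintype.card G : ℂ) := by
  have hne : (Fintype.card G : ℂ) ≠ 0 := by exact_mod_cast Fintype.card_ne_zero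
  have h := FDRep.char_orthonormal (k := ℂ) V V
  rw [if_pos ⟨CategoryTheory.Iso.refl V⟩, Nat.card_eq_fintype_card,
    inv_mul_eq_iff_eq_mul₀ hne] at h
  simpa using h

/-- degree squared times |Z| equals |G| for a character vanishing off the center. -/
lemma aux_sq (G : Type) [Group G] [Fintype G] (χ : G → ℂ) (hχ : IsIrrChar G χ)
    (hχv : ∀ g : G, g ∉ Subgroup.center G → χ g = 0)
    (lam : ↥(Subgroup.center G) →* ℂ)
    (hlam : ∀ z : ↥(Subgroup.center G), χ ↑z = χ 1 * lam z) :
    χ 1 * χ 1 * (Nat.card ↥(Subgroup.center G) : ℂ) = (Fintype.card G : ℂ) := by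
  classical
  obtain ⟨V, hS, rfl⟩ := hχ
  haveI := hS
  have key := aux_orth G V
  set χ := V.character
  have hsum : ∑ g : G, χ g * χ g⁻¹
      = ∑ g : G, (if g ∈ Subgroup.center G then χ 1 * χ 1 else 0) := by
    refine Finset.sum_congr rfl fun g _ => ?_
    by_cases h : g ∈ Subgroup.center G
    · rw [if_pos h]
      have h' : g⁻¹ ∈ Subgroup.center G := inv_mem h
      have e1 := hlam ⟨g, h⟩
      have e2 := hlam ⟨g⁻¹, h'⟩
      simp only at e1 e2
      rw [e1, e2]
      have : lam ⟨g, h⟩ * lam ⟨g⁻¹, h'⟩ = 1 := by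
        rw [← map_mul]
        convert map_one lam
        ext
        simp
      rw [mul_mul_mul_comm, this, mul_one]
    · rw [if_neg h, hχv g h, zero_mul]
  rw [hsum, ← Finset.sum_filter, Finset.sum_const, nsmul_eq_mul] at key
  rw [← key, Nat.card_eq_fintype_card, Fintype.card_subtype]
  ring

/-- If the irreducible characters χ and ψ both vanish outside the center Z, with
central characters λ and μ, then χψ is the character induced from λμ. -/
theorem stmt11 (G : Type) [Group G] [Fintype G]
    (χ ψ : G → ℂ) (hχ : IsIrrChar G χ) (hψ : IsIrrChar G ψ)
    (hχv : ∀ g : G, g ∉ Subgroup.center G → χ g = 0)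
    (hψv : ∀ g : G, g ∉ Subgroup.center G → ψ g = 0)
    (lam mu : ↥(Subgroup.center G) →* ℂ)
    (hlam : ∀ z : ↥(Subgroup.center G), χ ↑z = χ 1 * lam z)
    (hmu : ∀ z : ↥(Subgroup.center G), ψ ↑z = ψ 1 * mu z) :
    ∀ g : G, χ g * ψ g = inducedChar G (Subgroup.center G) (fun z => lam z * mu z) g := by
  classical
  have hχsq := aux_sq G χ hχ hχv lam hlam
  have hψsq := aux_sq G ψ hψ hψv mu hmu
  have hz : (Nat.card ↥(Subgroup.center G) : ℂ) ≠ 0 := by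
    exact_mod_cast Nat.card_pos.ne'
  have hdeg : χ 1 = ψ 1 := by
    obtain ⟨V, hSV, hV⟩ := hχ
    obtain ⟨W, hSW, hW⟩ := hψ
    have h1 : χ 1 = (Module.finrank ℂ V : ℂ) := by
      rw [← hV]; exact_mod_cast FDRep.char_one V
    have h2 : ψ 1 = (Module.finrank ℂ W : ℂ) := by
      rw [← hW]; exact_mod_cast FDRep.char_one W
    have hmm : χ 1 * χ 1 = ψ 1 * ψ 1 :=
      mul_right_cancel₀ hz (hχsq.trans hψsq.symm)
    rw [h1, h2] at hmm ⊢
    have hn : (Module.finrank ℂ V) * (Module.finrank ℂ V)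
        = (Module.finrank ℂ W) * (Module.finrank ℂ W) := by exact_mod_cast hmm
    exact_mod_cast Nat.mul_self_inj.mp hn
  intro g
  by_cases hg : g ∈ Subgroup.center G
  · have e1 := hlam ⟨g, hg⟩
    have e2 := hmu ⟨g, hg⟩
    simp only at e1 e2
    simp only [inducedChar]
    have hterm : ∀ x : G, (if h : x⁻¹ * g * x ∈ Subgroup.center G then
        lam ⟨x⁻¹ * g * x, h⟩ * mu ⟨x⁻¹ * g * x, h⟩ else 0)
        = lam ⟨g, hg⟩ * mu ⟨g, hg⟩ := by
      intro x
      have hc := Subgroup.mem_center_iff.mp hg x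
      have hx : x⁻¹ * g * x = g := by
        rw [mul_assoc, ← hc, ← mul_assoc, inv_mul_cancel, one_mul]
      simp only [hx, dif_pos hg]
    rw [Finset.sum_congr rfl (fun x _ => hterm x), Finset.sum_const, nsmul_eq_mul,
      e1, e2, ← hdeg]
    simp only [Nat.card_eq_fintype_card, Finset.card_univ] at hχsq hz ⊢
    field_simp
    linear_combination (lam ⟨g, hg⟩ * mu ⟨g, hg⟩) * hχsq
  · rw [hχv g hg, zero_mul]
    simp only [inducedChar]
    have hall : ∀ x : G, (if h : x⁻¹ * g * x ∈ Subgroup.center G then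
        lam ⟨x⁻¹ * g * x, h⟩ * mu ⟨x⁻¹ * g * x, h⟩ else 0) = 0 := by
      intro x
      rw [dif_neg]
      intro h
      apply hg
      apply Subgroup.mem_center_iff.mpr
      intro h'
      have hk := Subgroup.mem_center_iff.mp h (x⁻¹ * h' * x)
      rw [show (x⁻¹*h'*x)*(x⁻¹*g*x) = x⁻¹*(h'*g)*x by group,
          show (x⁻¹*g*x)*(x⁻¹*h'*x) = x⁻¹*(g*h')*x by group] at hk
      exact mul_left_cancel (mul_right_cancel hk)
    rw [Finset.sum_congr rfl (fun x _ => hall x), Finset.sum_const_zero, mul_zero]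
end

section
/- Let p be a prime and G a finite p-group whose center Z = Z(G) is cyclic and a proper subgroup of G. Let Y be a normal subgroup of G with Z < Y and |Y : Z| = p. Then Y is abelian, the centralizer H = C_G(Y) is a normal subgroup of index p in G, and for every g ∈ G \ H and every y ∈ Y \ Z, the commutator [g,y] is a nontrivial element of the unique subgroup of order p of Z. -/
section Aux

variable {G : Type*} [Group G]

lemma aux_conj_zpow (g y : G) (k : ℤ) : (g⁻¹ * y * g) ^ k = g⁻¹ * y ^ k * g := by
  have h := map_zpow (MulAut.conj g⁻¹) y k
  simp only [MulAut.conj_apply, inv_inv] at h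
  exact h.symm

lemma aux_center_comm {z : G} (hz : z ∈ Subgroup.center G) (a : G) : a * z = z * a :=
  Subgroup.mem_center_iff.mp hz a


lemma aux_comm_iff {G : Type*} [Group G] (g y : G) :
    g⁻¹ * y⁻¹ * g * y = 1 ↔ g * y = y * g := by
  rw [show g⁻¹ * y⁻¹ * g * y = (y * g)⁻¹ * (g * y) by group, inv_mul_eq_one, eq_comm]

end Aux

/-- Fact 3.1: if G is a finite p-group with cyclic proper center Z and Y ⊴ G with
Z < Y and |Y:Z| = p, then Y is abelian, H = C_G(Y) is normal of index p in G, and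
for g ∈ G \ H and y ∈ Y \ Z the commutator [g,y] = g⁻¹y⁻¹gy is a nontrivial
element of the unique subgroup of order p of Z (i.e. a nontrivial central element
whose p-th power is 1). -/
theorem stmt13 {p : ℕ} (hp : p.Prime) (G : Type*) [Group G] [Finite G]
    (hG : IsPGroup p G) (hcyc : IsCyclic ↥(Subgroup.center G))
    (hproper : Subgroup.center G ≠ ⊤)
    (Y : Subgroup G) (hY : Y.Normal) (hZY : Subgroup.center G < Y)
    (hidx : (Subgroup.center G).relIndex Y = p) :
    (∀ a b : G, a ∈ Y → b ∈ Y → a * b = b * a) ∧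
    (Subgroup.centralizer (Y : Set G)).Normal ∧
    (Subgroup.centralizer (Y : Set G)).index = p ∧
    ∀ g : G, g ∉ Subgroup.centralizer (Y : Set G) →
      ∀ y ∈ Y, y ∉ Subgroup.center G →
        g⁻¹ * y⁻¹ * g * y ≠ 1 ∧ g⁻¹ * y⁻¹ * g * y ∈ Subgroup.center G ∧
          (g⁻¹ * y⁻¹ * g * y) ^ p = 1 := by
  classical
  haveI : Fact p.Prime := ⟨hp⟩
  set Z := Subgroup.center G with hZdef
  have hZle : Z ≤ Y := hZY.le
  -- the quotient Y / (Z ∩ Y) has cardinality p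
  haveI hZ'n : ((Z.subgroupOf Y)).Normal := by
    constructor
    intro n hn g
    have h1 : (n : G) ∈ Z := hn
    have h2 : ((g * n * g⁻¹ : Y) : G) = (n : G) := by
      push_cast
      have h3 := aux_center_comm h1 (g : G)
      rw [h3, mul_assoc, mul_inv_cancel, mul_one]
    rw [Subgroup.mem_subgroupOf, h2]
    exact h1
  have hQcard : Nat.card (Y ⧸ (Z.subgroupOf Y)) = p := hidx
  -- p-th powers of elements of Y are central
  have hpowZ : ∀ y : G, y ∈ Y → y ^ p ∈ Z := by
    intro y hy
    have h1 : ((⟨y, hy⟩ : Y) : Y ⧸ (Z.subgroupOf Y)) ^ p = 1 := by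
      rw [← hQcard]; exact pow_card_eq_one'
    rw [← QuotientGroup.mk_pow, QuotientGroup.eq_one_iff, Subgroup.mem_subgroupOf] at h1
    simpa using h1
  -- for y ∈ Y \ Z : y^j ∈ Z ↔ p ∣ j
  have horder : ∀ y : G, ∀ hy : y ∈ Y, y ∉ Z → ∀ j : ℤ, (y ^ j ∈ Z ↔ (p : ℤ) ∣ j) := by
    intro y hy hyZ j
    set yb : Y ⧸ (Z.subgroupOf Y) := ((⟨y, hy⟩ : Y) : Y ⧸ (Z.subgroupOf Y)) with hyb
    have hne : yb ≠ 1 := by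
      rw [hyb, Ne, QuotientGroup.eq_one_iff, Subgroup.mem_subgroupOf]
      exact hyZ
    have hdvd : orderOf yb ∣ p := hQcard ▸ orderOf_dvd_natCard yb
    have hordp : orderOf yb = p := by
      rcases (Nat.Prime.eq_one_or_self_of_dvd hp _ hdvd) with h | h
      · exact absurd (orderOf_eq_one_iff.mp h) hne
      · exact h
    have key : y ^ j ∈ Z ↔ yb ^ j = 1 := by
      rw [hyb, ← QuotientGroup.mk_zpow, QuotientGroup.eq_one_iff, Subgroup.mem_subgroupOf]
      norm_cast
    rw [key, ← orderOf_dvd_iff_zpow_eq_one, hordp]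
  -- structure of Y : every element is z * y^k for a fixed y ∈ Y \ Z
  have hstruct : ∀ y : G, y ∈ Y → y ∉ Z → ∀ x ∈ Y, ∃ z ∈ Z, ∃ k : ℤ, x = z * y ^ k := by
    intro y hy hyZ x hx
    set K : Subgroup G := Z ⊔ Subgroup.zpowers y with hK
    have hZK : Z ≤ K := le_sup_left
    have hKY : K ≤ Y := sup_le hZle ((Subgroup.zpowers_le).mpr hy)
    have hmul : Z.relIndex K * K.relIndex Y = p := by
      rw [Subgroup.relIndex_mul_relIndex Z K Y hZK hKY, hidx]
    have hb : K.relIndex Y ∣ p := Dvd.intro_left _ hmul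
    have hYK : Y ≤ K := by
      rcases hp.eq_one_or_self_of_dvd _ hb with h | h
      · exact Subgroup.relIndex_eq_one.mp h
      · exfalso
        rw [h] at hmul
        have ha : Z.relIndex K = 1 := by
          have hp0 : 0 < p := hp.pos
          nlinarith [Nat.le_of_dvd hp0 (Dvd.intro _ hmul)]
        have hKZ : K ≤ Z := Subgroup.relIndex_eq_one.mp ha
        exact hyZ (hKZ ((le_sup_right : Subgroup.zpowers y ≤ K) (Subgroup.mem_zpowers y)))
    have hxK : x ∈ (K : Set G) := hYK hx
    rw [hK, Subgroup.normal_mul] at hxK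
    rcases hxK with ⟨z, hz, t, ht, rfl⟩
    rcases Subgroup.mem_zpowers_iff.mp ht with ⟨k, rfl⟩
    exact ⟨z, hz, k, rfl⟩
  -- main commutator lemma : [g,y] ∈ Z
  have hcommZ : ∀ g y : G, y ∈ Y → y ∉ Z → g⁻¹ * y⁻¹ * g * y ∈ Z := by
    intro g y hy hyZ
    have hconj : g⁻¹ * y * g ∈ Y := by
      simpa using hY.conj_mem y hy g⁻¹
    rcases hstruct y hy hyZ _ hconj with ⟨z, hz, m, heq⟩
    -- iterate conjugation
    have hiter : ∀ n : ℕ, ∃ w ∈ Z, (g⁻¹) ^ n * y * g ^ n = w * y ^ (m ^ n) := by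
      intro n
      induction n with
      | zero => exact ⟨1, one_mem _, by simp⟩
      | succ n ih =>
        rcases ih with ⟨w, hw, hwe⟩
        refine ⟨w * z ^ (m ^ n), mul_mem hw (zpow_mem hz _), ?_⟩
        have h1 : (g⁻¹) ^ (n + 1) * y * g ^ (n + 1) = g⁻¹ * ((g⁻¹) ^ n * y * g ^ n) * g := by
          rw [pow_succ g, pow_succ' g⁻¹]; group
        rw [h1, hwe]
        have h2 : g⁻¹ * (w * y ^ (m ^ n)) * g = w * (g⁻¹ * y ^ (m ^ n) * g) := by
          have hcw := aux_center_comm hw g⁻¹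
          rw [show g⁻¹ * (w * y ^ (m ^ n)) * g = (g⁻¹ * w) * (y ^ (m ^ n) * g) by group, hcw]
          group
        rw [h2, ← aux_conj_zpow g y (m ^ n), heq]
        have hcom : Commute z (y ^ m) := (Subgroup.mem_center_iff.mp hz (y ^ m)).symm
        rw [hcom.mul_zpow]
        rw [← zpow_mul, ← mul_assoc]
        ring_nf
    obtain ⟨k, hgk⟩ := hG g
    rcases hiter (p ^ k) with ⟨w, hw, hwe⟩
    rw [inv_pow, hgk] at hwe
    simp only [inv_one, one_mul, mul_one] at hwe
    -- y = w * y ^ (m ^ p^k)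
    have h6 : y * (y ^ ((m : ℤ) ^ (p ^ k)))⁻¹ = w := by
      nth_rewrite 1 [hwe]
      group
    have hy1 : y ^ (1 - m ^ (p ^ k)) ∈ Z := by
      have h7 : y ^ ((1 : ℤ) - m ^ (p ^ k)) = w := by
        rw [sub_eq_add_neg, zpow_add, zpow_one, zpow_neg]; exact h6
      rw [h7]; exact hw
    have hdvd1 : (p : ℤ) ∣ 1 - m ^ (p ^ k) := (horder y hy hyZ _).mp hy1
    -- Fermat: m ≡ 1 mod p
    have hm1 : (p : ℤ) ∣ m - 1 := by
      have hz0 : ((1 - m ^ (p ^ k) : ℤ) : ZMod p) = 0 :=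
        (ZMod.intCast_zmod_eq_zero_iff_dvd _ _).mpr hdvd1
      push_cast at hz0
      have hfr : ∀ j : ℕ, ((m : ZMod p)) ^ (p ^ j) = (m : ZMod p) := by
        intro j
        induction j with
        | zero => simp
        | succ j ih => rw [pow_succ, pow_mul, ih, ZMod.pow_card]
      rw [hfr k] at hz0
      have h8 : ((m - 1 : ℤ) : ZMod p) = 0 := by push_cast; linear_combination -hz0
      exact (ZMod.intCast_zmod_eq_zero_iff_dvd _ _).mp h8
    have hy2 : y ^ (1 - m) ∈ Z := by
      refine (horder y hy hyZ _).mpr ?_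
      rw [show (1 - m : ℤ) = -(m - 1) by ring]
      exact dvd_neg.mpr hm1
    -- conclude
    have hc : g⁻¹ * y⁻¹ * g * y = z⁻¹ * y ^ (1 - m) := by
      have h3 : g⁻¹ * y⁻¹ * g * y = (g⁻¹ * y * g)⁻¹ * y := by group
      rw [h3, heq, mul_inv_rev, ← zpow_neg]
      have hzc := aux_center_comm (inv_mem hz) (y ^ (-m))
      rw [hzc, mul_assoc, show (1 - m : ℤ) = -m + 1 by ring, zpow_add, zpow_one]
    rw [hc]
    exact mul_mem (inv_mem hz) hy2
  
  -- commutator p-th power is 1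
  have hcp : ∀ g y : G, y ∈ Y → y ∉ Z → (g⁻¹ * y⁻¹ * g * y) ^ p = 1 := by
    intro g y hy hyZ
    set c : G := g⁻¹ * y⁻¹ * g * y with hcdef
    have hcZ : c ∈ Z := hcommZ g y hy hyZ
    have claim : ∀ n : ℕ, c ^ n = g⁻¹ * (y ^ n)⁻¹ * g * y ^ n := by
      intro n
      induction n with
      | zero => simp
      | succ n ih =>
        have hcc := aux_center_comm hcZ (y ^ n)
        calc c ^ (n + 1) = c ^ n * c := pow_succ c n
          _ = g⁻¹ * (y ^ n)⁻¹ * g * y ^ n * c := by rw [ih]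
          _ = g⁻¹ * (y ^ n)⁻¹ * g * (c * y ^ n) := by rw [mul_assoc, hcc]
          _ = g⁻¹ * (y ^ (n + 1))⁻¹ * g * y ^ (n + 1) := by
              rw [hcdef, pow_succ]; group
    rw [claim p]
    have hyp := aux_center_comm (hpowZ y hy) g
    rw [show g⁻¹ * (y ^ p)⁻¹ * g * y ^ p = (y ^ p * g)⁻¹ * (g * y ^ p) by group, ← hyp]
    group
  -- commuting with a noncentral element of Y means centralizing Y
  have hcent_of : ∀ y : G, y ∈ Y → y ∉ Z → ∀ g : G, g * y = y * g →
      g ∈ Subgroup.centralizer (Y : Set G) := by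
    intro y hy hyZ g hgy
    rw [Subgroup.mem_centralizer_iff]
    intro x hx
    rcases hstruct y hy hyZ x hx with ⟨z, hz, k, rfl⟩
    have h1 : Commute g y := hgy
    have h2 : Commute g (y ^ k) := h1.zpow_right k
    have h3 : Commute g z := aux_center_comm hz g
    exact ((h3.mul_right h2).symm).eq
  -- abelian
  obtain ⟨y₀, hy₀Y, hy₀Z⟩ := SetLike.exists_of_lt hZY
  have habel : ∀ a b : G, a ∈ Y → b ∈ Y → a * b = b * a := by
    intro a b ha hb
    rcases hstruct y₀ hy₀Y hy₀Z a ha with ⟨z1, hz1, k1, rfl⟩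
    rcases hstruct y₀ hy₀Y hy₀Z b hb with ⟨z2, hz2, k2, rfl⟩
    have ca : Commute z1 (z2 * y₀ ^ k2) := (aux_center_comm hz1 _).symm
    have cb : Commute (y₀ ^ k1) (z2 * y₀ ^ k2) :=
      Commute.mul_right (aux_center_comm hz2 (y₀ ^ k1))
        ((Commute.refl y₀).zpow_zpow k1 k2)
    exact (Commute.mul_left ca cb).eq
  -- normality of the centralizer
  have hHnorm : (Subgroup.centralizer (Y : Set G)).Normal := by
    constructor
    intro h hh g
    rw [Subgroup.mem_centralizer_iff] at hh ⊢
    intro x hx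
    have hx' : g⁻¹ * x * g ∈ Y := by simpa using hY.conj_mem x hx g⁻¹
    have hcx := hh _ hx'
    calc x * (g * h * g⁻¹) = g * ((g⁻¹ * x * g) * h) * g⁻¹ := by group
      _ = g * (h * (g⁻¹ * x * g)) * g⁻¹ := by rw [hcx]
      _ = (g * h * g⁻¹) * x := by group
  -- the commutator homomorphism
  let φ : G →* G := {
    toFun := fun g => g⁻¹ * y₀⁻¹ * g * y₀
    map_one' := by group
    map_mul' := by
      intro a b
      have ha : a⁻¹ * y₀⁻¹ * a * y₀ ∈ Z := hcommZ a y₀ hy₀Y hy₀Z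
      have hc := aux_center_comm ha b⁻¹
      show (a * b)⁻¹ * y₀⁻¹ * (a * b) * y₀ =
        (a⁻¹ * y₀⁻¹ * a * y₀) * (b⁻¹ * y₀⁻¹ * b * y₀)
      rw [show (a * b)⁻¹ * y₀⁻¹ * (a * b) * y₀ =
        b⁻¹ * (a⁻¹ * y₀⁻¹ * a * y₀) * (y₀⁻¹ * b * y₀) by group, hc]
      group }
  have hφ : ∀ g : G, φ g = g⁻¹ * y₀⁻¹ * g * y₀ := fun g => rfl
  have hker : φ.ker = Subgroup.centralizer (Y : Set G) := by
    ext g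
    rw [MonoidHom.mem_ker, hφ, aux_comm_iff]
    constructor
    · intro hg
      exact hcent_of y₀ hy₀Y hy₀Z g hg
    · intro hg
      exact (Subgroup.mem_centralizer_iff.mp hg y₀ hy₀Y).symm
  have hidxH : (Subgroup.centralizer (Y : Set G)).index = p := by
    rw [← hker, Subgroup.index_ker]
    have hrangeZ : ∀ x : φ.range, (x : G) ∈ Z ∧ (x : G) ^ p = 1 := by
      rintro ⟨x, g, rfl⟩
      exact ⟨hcommZ g y₀ hy₀Y hy₀Z, hcp g y₀ hy₀Y hy₀Z⟩
    haveI : Fintype ↥Z := Fintype.ofFinite _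
    have hupper : Nat.card φ.range ≤ p := by
      set f : φ.range → {z : ↥Z // z ^ p = 1} := fun x =>
        ⟨⟨(x : G), (hrangeZ x).1⟩, Subtype.ext (by simpa using (hrangeZ x).2)⟩ with hf
      have hinj : Function.Injective f := by
        intro a b hab
        apply Subtype.ext
        exact congrArg (fun t : {z : ↥Z // z ^ p = 1} => ((t : ↥Z) : G)) hab
      calc Nat.card φ.range ≤ Nat.card {z : ↥Z // z ^ p = 1} :=
            Nat.card_le_card_of_injective f hinj
        _ = (Finset.filter (fun a : ↥Z => a ^ p = 1) Finset.univ).card := by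
            rw [Nat.card_eq_fintype_card, Fintype.card_subtype]
        _ ≤ p := IsCyclic.card_pow_eq_one_le hp.pos
    have hlower : p ∣ Nat.card φ.range := by
      have hnontriv : ∃ g : G, φ g ≠ 1 := by
        by_contra h
        push_neg at h
        apply hy₀Z
        rw [hZdef, Subgroup.mem_center_iff]
        intro g
        exact (aux_comm_iff g y₀).mp (by rw [← hφ g]; exact h g)
      obtain ⟨g₀, hg₀⟩ := hnontriv
      have hord : orderOf (φ g₀) = p :=
        orderOf_eq_prime (by rw [hφ]; exact hcp g₀ y₀ hy₀Y hy₀Z) hg₀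
      have hx₀ : orderOf (⟨φ g₀, ⟨g₀, rfl⟩⟩ : φ.range) = p := by
        rw [← Subgroup.orderOf_coe]; exact hord
      rw [← hx₀]
      exact orderOf_dvd_natCard _
    exact le_antisymm hupper (Nat.le_of_dvd Nat.card_pos hlower)
  refine ⟨habel, hHnorm, hidxH, ?_⟩
  intro g hg y hy hyZ
  refine ⟨?_, hcommZ g y hy hyZ, hcp g y hy hyZ⟩
  intro h1
  exact hg (hcent_of y hy hyZ g ((aux_comm_iff g y).mp h1))
end

section
/- Let p be a prime, G a finite p-group with cyclic center Z = Z(G), and let Y be an abelian normal subgroup of G with Z < Y and |Y : Z| = p. Let χ be a faithful irreducible complex character of G and let λ be the unique (necessarily faithful) linear character of Z with χ restricted to Z equal to χ(1)·λ. Then the set Lin(Y | λ) of linear characters of Y extending λ has exactly p elements, these form a single orbit under the conjugation action of G, and the restriction of χ to Y equals (χ(1)/p) · Σ_{ρ ∈ Lin(Y | λ)} ρ. -/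
open scoped ComplexOrder

section CliffordHelpers
open CategoryTheory
set_option linter.unusedSectionVars false

variable {G : Type} [Group G] {Y : Subgroup G} [Fintype ↥Y]

noncomputable def Pm (V : FDRep ℂ G) (ρ : ↥Y →* ℂ) : Module.End ℂ V :=
  (Fintype.card ↥Y : ℂ)⁻¹ • ∑ y : ↥Y, (ρ y)⁻¹ • (V.ρ ↑y : Module.End ℂ V)

lemma mh_ne_zero (ρ : ↥Y →* ℂ) (y : ↥Y) : ρ y ≠ 0 := by
  have h : ρ y * ρ y⁻¹ = 1 := by rw [← map_mul, mul_inv_cancel, map_one]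
  exact left_ne_zero_of_mul_eq_one h

lemma rho_mul_Pm (V : FDRep ℂ G) (ρ : ↥Y →* ℂ) (y : ↥Y) :
    (V.ρ ↑y : Module.End ℂ V) * Pm V ρ = ρ y • Pm V ρ := by
  have key : (∑ u : ↥Y, (V.ρ ↑y : Module.End ℂ V) * ((ρ u)⁻¹ • (V.ρ ↑u : Module.End ℂ V)))
      = ∑ u : ↥Y, ρ y • ((ρ u)⁻¹ • (V.ρ ↑u : Module.End ℂ V)) := by
    refine Fintype.sum_equiv (Equiv.mulLeft y)
      (fun u : ↥Y => (V.ρ ↑y : Module.End ℂ V) * ((ρ u)⁻¹ • (V.ρ ↑u : Module.End ℂ V)))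
      (fun u : ↥Y => ρ y • ((ρ u)⁻¹ • (V.ρ ↑u : Module.End ℂ V))) (fun u => ?_)
    simp only [Equiv.coe_mulLeft]
    rw [mul_smul_comm, map_mul, Subgroup.coe_mul, map_mul, smul_smul]
    congr 1
    rw [mul_inv, ← mul_assoc, mul_inv_cancel₀ (mh_ne_zero ρ y), one_mul]
  unfold Pm
  rw [mul_smul_comm, Finset.mul_sum, key, ← Finset.smul_sum, smul_comm]

lemma Pm_mul_rho (V : FDRep ℂ G) (ρ : ↥Y →* ℂ) (y : ↥Y) :
    Pm V ρ * (V.ρ ↑y : Module.End ℂ V) = ρ y • Pm V ρ := by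
  have key : (∑ u : ↥Y, ((ρ u)⁻¹ • (V.ρ ↑u : Module.End ℂ V)) * (V.ρ ↑y : Module.End ℂ V))
      = ∑ u : ↥Y, ρ y • ((ρ u)⁻¹ • (V.ρ ↑u : Module.End ℂ V)) := by
    refine Fintype.sum_equiv (Equiv.mulRight y)
      (fun u : ↥Y => ((ρ u)⁻¹ • (V.ρ ↑u : Module.End ℂ V)) * (V.ρ ↑y : Module.End ℂ V))
      (fun u : ↥Y => ρ y • ((ρ u)⁻¹ • (V.ρ ↑u : Module.End ℂ V))) (fun u => ?_)
    simp only [Equiv.coe_mulRight]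
    rw [smul_mul_assoc, map_mul, Subgroup.coe_mul, map_mul, smul_smul]
    congr 1
    rw [mul_inv, mul_comm ((ρ u)⁻¹), ← mul_assoc, mul_inv_cancel₀ (mh_ne_zero ρ y), one_mul]
  unfold Pm
  rw [smul_mul_assoc, Finset.sum_mul, key, ← Finset.smul_sum, smul_comm]

lemma sum_mh (τ : ↥Y →* ℂ) (h : τ ≠ 1) : ∑ y : ↥Y, τ y = 0 := by
  obtain ⟨y₀, hy₀⟩ : ∃ y₀, τ y₀ ≠ 1 := by
    by_contra hc
    push_neg at hc
    exact h (MonoidHom.ext fun y => (hc y).trans rfl)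
  have key : τ y₀ * ∑ y : ↥Y, τ y = ∑ y : ↥Y, τ y := by
    rw [Finset.mul_sum]
    refine Fintype.sum_equiv (Equiv.mulLeft y₀) _ _ (fun u => ?_)
    simp [← map_mul]
  have := sub_eq_zero.mpr key
  rw [← sub_one_mul] at this
  rcases mul_eq_zero.mp this with h1 | h2
  · exact absurd (by linear_combination h1 : τ y₀ = 1) hy₀
  · exact h2

lemma Pm_mul (V : FDRep ℂ G) (ρ : ↥Y →* ℂ) (A : Module.End ℂ V) :
    Pm V ρ * A = (Fintype.card ↥Y : ℂ)⁻¹ • ∑ y : ↥Y, (ρ y)⁻¹ • ((V.ρ ↑y : Module.End ℂ V) * A) := by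
  rw [Pm, smul_mul_assoc, Finset.sum_mul]
  simp only [smul_mul_assoc]

lemma Pm_mul_Pm_self (V : FDRep ℂ G) (ρ : ↥Y →* ℂ) : Pm V ρ * Pm V ρ = Pm V ρ := by
  rw [Pm_mul]
  have h2 : ∀ y : ↥Y, (ρ y)⁻¹ • ((V.ρ ↑y : Module.End ℂ V) * Pm V ρ) = Pm V ρ := fun y => by
    rw [rho_mul_Pm, smul_smul, inv_mul_cancel₀ (mh_ne_zero ρ y), one_smul]
  rw [Finset.sum_congr rfl (fun y _ => h2 y), Finset.sum_const, Finset.card_univ,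
    ← Nat.cast_smul_eq_nsmul ℂ, smul_smul, inv_mul_cancel₀, one_smul]
  exact_mod_cast Fintype.card_ne_zero

/-- The product character `y ↦ (σ y)⁻¹ * ρ y`. -/
noncomputable def ratioMH (σ ρ : ↥Y →* ℂ) : ↥Y →* ℂ where
  toFun y := (σ y)⁻¹ * ρ y
  map_one' := by simp
  map_mul' a b := by rw [map_mul, map_mul, mul_inv]; ring

lemma Pm_mul_Pm_ne (V : FDRep ℂ G) (σ ρ : ↥Y →* ℂ) (h : σ ≠ ρ) : Pm V σ * Pm V ρ = 0 := by
  rw [Pm_mul]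
  have h2 : ∀ y : ↥Y, (σ y)⁻¹ • ((V.ρ ↑y : Module.End ℂ V) * Pm V ρ)
      = ratioMH σ ρ y • Pm V ρ := fun y => by
    rw [rho_mul_Pm, smul_smul]; rfl
  rw [Finset.sum_congr rfl (fun y _ => h2 y), ← Finset.sum_smul, sum_mh, zero_smul, smul_zero]
  intro heq
  apply h
  ext y
  have := congrArg (fun f : ↥Y →* ℂ => f y) heq
  simp only [MonoidHom.one_apply] at this
  have h3 : (σ y)⁻¹ * ρ y = 1 := this
  exact ((inv_mul_eq_one₀ (mh_ne_zero σ y)).mp h3)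

/-- Conjugation by `g` as a monoid hom `Y →* Y` (for `Y` normal). -/
def conjMH (hY : Y.Normal) (g : G) : ↥Y →* ↥Y where
  toFun y := ⟨g * ↑y * g⁻¹, hY.conj_mem _ y.2 g⟩
  map_one' := by ext; simp
  map_mul' a b := by ext; simp

/-- Conjugation by `g` as an equivalence `Y ≃ Y`. -/
def conjE (hY : Y.Normal) (g : G) : ↥Y ≃ ↥Y where
  toFun := conjMH hY g
  invFun := conjMH hY g⁻¹
  left_inv y := by ext; simp [conjMH]; group
  right_inv y := by ext; simp [conjMH]; group

lemma conjMH_conjMH (hY : Y.Normal) (g : G) (y : ↥Y) :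
    conjMH hY g⁻¹ (conjMH hY g y) = y := (conjE hY g).left_inv y

lemma rho_mul_rho_inv (V : FDRep ℂ G) (g : G) :
    (V.ρ g : Module.End ℂ V) * (V.ρ g⁻¹ : Module.End ℂ V) = 1 := by
  rw [← map_mul, mul_inv_cancel, map_one]

lemma conj_Pm (hY : Y.Normal) (V : FDRep ℂ G) (ρ : ↥Y →* ℂ) (g : G) :
    (V.ρ g : Module.End ℂ V) * Pm V ρ * (V.ρ g⁻¹ : Module.End ℂ V)
      = Pm V (ρ.comp (conjMH hY g⁻¹)) := by
  rw [Pm, Pm, mul_smul_comm, smul_mul_assoc]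
  congr 1
  rw [Finset.mul_sum, Finset.sum_mul]
  refine Fintype.sum_equiv (conjE hY g)
    (fun y : ↥Y => (V.ρ g : Module.End ℂ V) * ((ρ y)⁻¹ • (V.ρ ↑y : Module.End ℂ V)) * (V.ρ g⁻¹ : Module.End ℂ V))
    (fun u : ↥Y => ((ρ (conjMH hY g⁻¹ u))⁻¹ • (V.ρ ↑u : Module.End ℂ V)))
    (fun y => ?_)
  have h1 : conjMH hY g⁻¹ ((conjE hY g) y) = y := conjMH_conjMH hY g y
  have h2 : (↑((conjE hY g) y) : G) = g * ↑y * g⁻¹ := rfl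
  rw [h1, h2, mul_smul_comm, smul_mul_assoc]
  congr 1
  rw [← map_mul, ← map_mul]

lemma trace_Pm_conj (hY : Y.Normal) (V : FDRep ℂ G) (ρ : ↥Y →* ℂ) (g : G) :
    LinearMap.trace ℂ V (Pm V (ρ.comp (conjMH hY g⁻¹))) = LinearMap.trace ℂ V (Pm V ρ) := by
  rw [← conj_Pm, LinearMap.trace_mul_comm, ← mul_assoc, ← map_mul, inv_mul_cancel, map_one, one_mul]

open CategoryTheory in
lemma inv_submodule_eq_top (V : FDRep ℂ G) [Simple V] (U : Submodule ℂ V)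
    (hinv : ∀ g : G, ∀ x ∈ U, (V.ρ g) x ∈ U) (hne : U ≠ ⊥) : U = ⊤ := by
  classical
  let ρU : G →* (↥U →ₗ[ℂ] ↥U) :=
    { toFun := fun g => (V.ρ g).restrict (fun x hx => hinv g x hx)
      map_one' := by ext x; simp [LinearMap.restrict_apply]
      map_mul' := by intro g h; ext x; simp [LinearMap.restrict_apply] }
  let W : FDRep ℂ G := FDRep.of ρU
  let ι : W ⟶ V := ⟨FGModuleCat.ofHom U.subtype, fun g => by
    ext x
    rfl⟩
  have hιhom : ι.hom.hom.hom = U.subtype := rfl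
  haveI : Mono ι := by
    constructor
    intro Z f h H
    have H' := congrArg Action.Hom.hom H
    rw [Action.comp_hom, Action.comp_hom] at H'
    ext x
    exact congrArg (fun k => k.hom.hom x) H'
  have hι0 : ι ≠ 0 := by
    obtain ⟨x, hxU, hx0⟩ := Submodule.exists_mem_ne_zero_of_ne_bot hne
    intro h0
    have := congrArg (fun k => k.hom.hom.hom) h0
    rw [hιhom] at this
    exact hx0 (by simpa using LinearMap.congr_fun this ⟨x, hxU⟩)
  haveI : IsIso ι := (Simple.mono_isIso_iff_nonzero ι).mpr hι0
  rw [Submodule.eq_top_iff']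
  intro v
  have : ι.hom.hom.hom ((inv ι).hom.hom.hom v) = v := by
    have hcomp : ((inv ι) ≫ ι).hom = 𝟙 V.V := by rw [IsIso.inv_hom_id, Action.id_hom]
    have := congrArg (fun k => k.hom.hom v) ((Action.comp_hom (inv ι) ι).symm.trans hcomp)
    exact this
  rw [hιhom] at this
  rw [← this]
  exact ((inv ι).hom.hom.hom v).2

/-- The set of characters of `Y` "occurring" in `V`. -/
def Sset (V : FDRep ℂ G) (Y : Subgroup G) [Fintype ↥Y] : Set (↥Y →* ℂ) :=
  {σ : ↥Y →* ℂ | Pm V σ ≠ 0}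

lemma rho_mul_Pm_eq (hY : Y.Normal) (V : FDRep ℂ G) (ρ : ↥Y →* ℂ) (g : G) :
    (V.ρ g : Module.End ℂ V) * Pm V ρ = Pm V (ρ.comp (conjMH hY g⁻¹)) * (V.ρ g : Module.End ℂ V) := by
  rw [← conj_Pm hY V ρ g, mul_assoc, mul_assoc, ← map_mul, inv_mul_cancel, map_one, mul_one]

lemma Sset_conj (hY : Y.Normal) (V : FDRep ℂ G) (σ : ↥Y →* ℂ) (hσ : σ ∈ Sset V Y) (g : G) :
    σ.comp (conjMH hY g) ∈ Sset V Y := by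
  have h := conj_Pm hY V σ g⁻¹
  rw [inv_inv] at h
  intro h0
  apply hσ
  have e1 : (V.ρ g : Module.End ℂ V) * (V.ρ g⁻¹ : Module.End ℂ V) = 1 := rho_mul_rho_inv V g
  have key : (V.ρ g : Module.End ℂ V) * ((V.ρ g⁻¹ : Module.End ℂ V) * Pm V σ * (V.ρ g : Module.End ℂ V)) * (V.ρ g⁻¹ : Module.End ℂ V) = Pm V σ := by
    simp only [mul_assoc, e1, mul_one]
    rw [← mul_assoc, e1, one_mul]
  rw [← key, h, h0, mul_zero, zero_mul]

lemma Sset_transitive (hY : Y.Normal) (V : FDRep ℂ G) [Simple V] (ρ₀ : ↥Y →* ℂ)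
    (hρ₀ : ρ₀ ∈ Sset V Y) (σ : ↥Y →* ℂ) (hσ : σ ∈ Sset V Y) :
    ∃ g : G, σ = ρ₀.comp (conjMH hY g) := by
  by_contra hc
  push_neg at hc
  set U : Submodule ℂ V := ⨆ g : G, LinearMap.range ((V.ρ g : Module.End ℂ V) * Pm V ρ₀) with hU
  have hUinv : ∀ h : G, ∀ x ∈ U, (V.ρ h) x ∈ U := by
    intro h x hx
    refine Submodule.iSup_induction (motive := fun x => (V.ρ h) x ∈ U) _ hx (fun g x hx => ?_) (by simp) (fun a b ha hb => by rw [map_add]; exact U.add_mem ha hb)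
    obtain ⟨w, rfl⟩ := hx
    have : (V.ρ h) (((V.ρ g : Module.End ℂ V) * Pm V ρ₀) w)
        = ((V.ρ (h * g) : Module.End ℂ V) * Pm V ρ₀) w := by
      rw [map_mul]
      rfl
    rw [this]
    exact Submodule.mem_iSup_of_mem (h * g) (LinearMap.mem_range_self _ w)
  have hUne : U ≠ ⊥ := by
    obtain ⟨w, hw⟩ := DFunLike.ne_iff.mp hρ₀
    rw [Submodule.ne_bot_iff]
    refine ⟨Pm V ρ₀ w, ?_, by simpa using hw⟩
    refine Submodule.mem_iSup_of_mem 1 ?_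
    refine ⟨w, ?_⟩
    rw [map_one, one_mul]
  have hUtop := inv_submodule_eq_top V U hUinv hUne
  apply hσ
  have hker : ∀ g : G, LinearMap.range ((V.ρ g : Module.End ℂ V) * Pm V ρ₀) ≤ LinearMap.ker (Pm V σ) := by
    intro g
    rw [LinearMap.range_le_ker_iff, ← Module.End.mul_eq_comp, rho_mul_Pm_eq hY V ρ₀ g, ← mul_assoc,
      Pm_mul_Pm_ne V σ _ (hc g⁻¹), zero_mul]
  have : (⊤ : Submodule ℂ V) ≤ LinearMap.ker (Pm V σ) := hUtop ▸ iSup_le hker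
  ext w
  exact this (Submodule.mem_top) 

lemma Sset_finite (hY : Y.Normal) (V : FDRep ℂ G) [Simple V] [Fintype G] (ρ₀ : ↥Y →* ℂ)
    (hρ₀ : ρ₀ ∈ Sset V Y) : (Sset V Y).Finite := by
  have : Sset V Y ⊆ Set.range (fun g : G => ρ₀.comp (conjMH hY g)) := by
    intro σ hσ
    obtain ⟨g, hg⟩ := Sset_transitive hY V ρ₀ hρ₀ σ hσ
    exact ⟨g, hg.symm⟩
  exact (Set.finite_range _).subset this

lemma resolution (hY : Y.Normal) (V : FDRep ℂ G) [Simple V] [Fintype G] (ρ₀ : ↥Y →* ℂ)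
    (hρ₀ : ρ₀ ∈ Sset V Y) (hfin : (Sset V Y).Finite) :
    ∑ σ ∈ hfin.toFinset, Pm V σ = 1 := by
  classical
  set Q : Module.End ℂ V := ∑ σ ∈ hfin.toFinset, Pm V σ with hQ
  have hQP : ∀ σ ∈ hfin.toFinset, Q * Pm V σ = Pm V σ := by
    intro σ hσ
    rw [hQ, Finset.sum_mul]
    rw [Finset.sum_eq_single σ]
    · exact Pm_mul_Pm_self V σ
    · intro σ' _ hne
      exact Pm_mul_Pm_ne V σ' σ hne
    · intro habs
      exact absurd hσ habs
  -- U = ⊤ as before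
  set U : Submodule ℂ V := ⨆ g : G, LinearMap.range ((V.ρ g : Module.End ℂ V) * Pm V ρ₀) with hU
  have hUinv : ∀ h : G, ∀ x ∈ U, (V.ρ h) x ∈ U := by
    intro h x hx
    refine Submodule.iSup_induction (motive := fun x => (V.ρ h) x ∈ U) _ hx (fun g x hx => ?_) (by simp) (fun a b ha hb => by rw [map_add]; exact U.add_mem ha hb)
    obtain ⟨w, rfl⟩ := hx
    have : (V.ρ h) (((V.ρ g : Module.End ℂ V) * Pm V ρ₀) w)
        = ((V.ρ (h * g) : Module.End ℂ V) * Pm V ρ₀) w := by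
      rw [map_mul]; rfl
    rw [this]
    exact Submodule.mem_iSup_of_mem (h * g) (LinearMap.mem_range_self _ w)
  have hUne : U ≠ ⊥ := by
    obtain ⟨w, hw⟩ := DFunLike.ne_iff.mp hρ₀
    rw [Submodule.ne_bot_iff]
    refine ⟨Pm V ρ₀ w, ?_, by simpa using hw⟩
    exact Submodule.mem_iSup_of_mem 1 ⟨w, by rw [map_one, one_mul]⟩
  have hUtop := inv_submodule_eq_top V U hUinv hUne
  have hker : ∀ g : G, LinearMap.range ((V.ρ g : Module.End ℂ V) * Pm V ρ₀)
      ≤ LinearMap.ker (Q - 1) := by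
    intro g
    rw [LinearMap.range_le_ker_iff, ← Module.End.mul_eq_comp, sub_mul, one_mul]
    rw [rho_mul_Pm_eq hY V ρ₀ g, ← mul_assoc]
    rw [hQP _ (hfin.mem_toFinset.mpr (by
      have := Sset_conj hY V ρ₀ hρ₀ g⁻¹
      rwa [← inv_inv g] at this ⊢))]
    exact sub_self _
  have hsub : (⊤ : Submodule ℂ V) ≤ LinearMap.ker (Q - 1) := hUtop ▸ iSup_le hker
  have : Q - 1 = 0 := LinearMap.ker_eq_top.mp (top_le_iff.mp hsub)
  have := sub_eq_zero.mp this
  exact this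

open CategoryTheory in
lemma nontrivial_of_simple (V : FDRep ℂ G) [Simple V] : Nontrivial V := by
  by_contra h
  rw [not_nontrivial_iff_subsingleton] at h
  have : (𝟙 V : V ⟶ V) = 0 := by
    apply Action.Hom.ext
    apply FGModuleCat.hom_ext
    apply LinearMap.ext
    intro x
    exact h.elim _ _
  exact CategoryTheory.id_nonzero V this

open CategoryTheory in
lemma rho_central_smul (V : FDRep ℂ G) [Simple V] {z : G} (hz : z ∈ Subgroup.center G) :
    ∃ c : ℂ, (V.ρ z : Module.End ℂ V) = c • 1 ∧ V.character z = c * (Module.finrank ℂ V : ℂ) := by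
  let f : V ⟶ V := ⟨FGModuleCat.ofHom (V.ρ z), by
    intro g
    apply FGModuleCat.hom_ext
    show (V.ρ (z : G)).comp (V.ρ g) = (V.ρ g).comp (V.ρ z)
    rw [← Module.End.mul_eq_comp, ← Module.End.mul_eq_comp, ← map_mul, ← map_mul, hz.comm]⟩
  obtain ⟨c, hc⟩ := CategoryTheory.endomorphism_simple_eq_smul_id ℂ f
  have hc' : (V.ρ z : Module.End ℂ V) = c • 1 := by
    have := congrArg Action.Hom.hom hc
    rw [Action.smul_hom, Action.id_hom] at this
    exact congrArg (fun k => k.hom.hom) this.symm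
  refine ⟨c, hc', ?_⟩
  show LinearMap.trace ℂ V (V.ρ z) = _
  rw [hc', map_smul, LinearMap.trace_one, smul_eq_mul]

/-- The conjugation action of `G` on characters of a normal subgroup `Y`. -/
def conjSMul (hY : Y.Normal) : MulAction G (↥Y →* ℂ) where
  smul g ρ := ρ.comp (conjMH hY g⁻¹)
  one_smul ρ := by
    ext y
    show ρ (conjMH hY 1⁻¹ y) = ρ y
    congr 1
    ext
    simp [conjMH]
  mul_smul g h ρ := by
    ext y
    show ρ (conjMH hY (g * h)⁻¹ y) = ρ (conjMH hY h⁻¹ (conjMH hY g⁻¹ y))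
    congr 1
    ext
    simp [conjMH]
    group

end CliffordHelpers

/-- For a finite p-group G with cyclic center Z, an abelian normal subgroup Y with
Z < Y and |Y:Z| = p, a faithful irreducible character χ with central character λ:
the set Lin(Y | λ) of linear characters of Y extending λ has exactly p elements,
is a single G-conjugacy orbit, and χ restricted to Y is (χ(1)/p) times its sum. -/
theorem stmt14 {p : ℕ} (hp : p.Prime) (G : Type) [Group G] [Fintype G]
    (hG : IsPGroup p G) (hcyc : IsCyclic ↥(Subgroup.center G))
    (Y : Subgroup G) (hY : Y.Normal) (hZY : Subgroup.center G < Y)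
    (hab : ∀ a b : G, a ∈ Y → b ∈ Y → a * b = b * a)
    (hidx : (Subgroup.center G).relIndex Y = p)
    (χ : G → ℂ) (hχ : IsIrrChar G χ) (hf : IsFaithfulChar G χ)
    (lam : ↥(Subgroup.center G) →* ℂ)
    (hlam : ∀ z : ↥(Subgroup.center G), χ ↑z = χ 1 * lam z) :
    let L : Set (↥Y →* ℂ) :=
      {ρ | ∀ (z : G) (hz : z ∈ Subgroup.center G), ρ ⟨z, hZY.le hz⟩ = lam ⟨z, hz⟩}
    L.ncard = p ∧
    (∀ ρ ∈ L, ∀ g : G, ∃ σ ∈ L, ∀ y : ↥Y,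
        σ y = ρ ⟨g * ↑y * g⁻¹, hY.conj_mem ↑y y.2 g⟩) ∧
    (∀ ρ ∈ L, ∀ σ ∈ L, ∃ g : G, ∀ y : ↥Y,
        σ y = ρ ⟨g * ↑y * g⁻¹, hY.conj_mem ↑y y.2 g⟩) ∧
    (∀ y : ↥Y, χ ↑y = χ 1 / (p : ℂ) * ∑ᶠ ρ ∈ L, ρ y) := by
  classical
  intro L
  obtain ⟨V, hsV, hchar⟩ := hχ
  haveI := hsV
  haveI : Fintype ↥Y := Fintype.ofFinite ↥Y
  haveI : Fact p.Prime := ⟨hp⟩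
  haveI := nontrivial_of_simple V
  have hχtr : ∀ g : G, χ g = LinearMap.trace ℂ V (V.ρ g) := fun g => by rw [← hchar]; rfl
  have hdpos : 0 < Module.finrank ℂ V := Module.finrank_pos
  have hd0 : ((Module.finrank ℂ V : ℕ) : ℂ) ≠ 0 := Nat.cast_ne_zero.mpr hdpos.ne'
  have hχ1 : χ 1 = ((Module.finrank ℂ V : ℕ) : ℂ) := by rw [← hchar]; exact FDRep.char_one V
  have hp0 : (p : ℂ) ≠ 0 := Nat.cast_ne_zero.mpr hp.ne_zero
  -- central elements act by the scalar `lam`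
  have hcent : ∀ (z : G) (hz : z ∈ Subgroup.center G),
      (V.ρ z : Module.End ℂ V) = lam ⟨z, hz⟩ • 1 := by
    intro z hz
    obtain ⟨c, hc1, hc2⟩ := rho_central_smul V hz
    have h3 : χ z = c * ((Module.finrank ℂ V : ℕ) : ℂ) := by rw [hχtr z]; exact hc2
    have h4 : χ z = ((Module.finrank ℂ V : ℕ) : ℂ) * lam ⟨z, hz⟩ := by
      have := hlam ⟨z, hz⟩
      rw [hχ1] at this
      exact this
    have h5 : c * ((Module.finrank ℂ V : ℕ) : ℂ) = lam ⟨z, hz⟩ * ((Module.finrank ℂ V : ℕ) : ℂ) := by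
      rw [← h3, h4, mul_comm]
    have hc := mul_right_cancel₀ hd0 h5
    rw [hc1, hc]
  -- faithfulness at the level of the representation
  have hfaith : ∀ g : G, (V.ρ g : Module.End ℂ V) = 1 → g = 1 := by
    intro g hg
    apply hf
    rw [hχtr g, hg, LinearMap.trace_one, hχ1]
  -- occurring characters extend lam
  have hSL : Sset V Y ⊆ L := by
    intro σ hσ
    intro z hz
    set y : ↥Y := ⟨z, hZY.le hz⟩ with hy
    have h1 : Pm V σ * (V.ρ (z : G) : Module.End ℂ V) = σ y • Pm V σ := Pm_mul_rho V σ y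
    rw [hcent z hz, mul_smul_comm, mul_one] at h1
    have h2 : (σ y - lam ⟨z, hz⟩) • Pm V σ = 0 := by
      rw [sub_smul, h1, sub_self]
    rcases smul_eq_zero.mp h2 with h | h
    · exact (sub_eq_zero.mp h)
    · exact absurd h hσ
  -- the subgroup Zy and a generator t of Y mod Z
  set Zy : Subgroup ↥Y := (Subgroup.center G).comap Y.subtype with hZydef
  haveI hZyN : Zy.Normal := by
    constructor
    intro n hn g
    have hcomm : g * n = n * g := Subtype.ext (hab ↑g ↑n g.2 n.2)
    have hgng : g * n * g⁻¹ = n := by rw [hcomm]; group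
    rw [hgng]
    exact hn
  have hQcard : Nat.card (↥Y ⧸ Zy) = p := hidx
  haveI : IsCyclic (↥Y ⧸ Zy) := isCyclic_of_prime_card hQcard
  obtain ⟨tbar, htbar⟩ := IsCyclic.exists_generator (α := ↥Y ⧸ Zy)
  obtain ⟨t, ht⟩ := QuotientGroup.mk'_surjective Zy tbar
  have ht' : ((t : ↥Y) : ↥Y ⧸ Zy) = tbar := ht
  have htp : (↑(t ^ p) : G) ∈ Subgroup.center G := by
    have h1 : tbar ^ p = 1 := by rw [← hQcard]; exact pow_card_eq_one'
    have h2 : ((t ^ p : ↥Y) : ↥Y ⧸ Zy) = 1 := by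
      rw [QuotientGroup.mk_pow, ht', h1]
    exact (QuotientGroup.eq_one_iff (t ^ p)).mp h2
  have hdecomp : ∀ y : ↥Y, ∃ (k : ℕ) (z : ↥Y), (↑z : G) ∈ Subgroup.center G ∧ y = z * t ^ k := by
    intro y
    have h0 : ((y : ↥Y ⧸ Zy)) ∈ Submonoid.powers tbar :=
      mem_powers_iff_mem_zpowers.mpr (htbar _)
    obtain ⟨k, hk⟩ := h0
    refine ⟨k, y * (t ^ k)⁻¹, ?_, by group⟩
    have hmem : y * (t ^ k)⁻¹ ∈ Zy := by
      have h2 : ((y * (t ^ k)⁻¹ : ↥Y) : ↥Y ⧸ Zy) = 1 := by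
        rw [QuotientGroup.mk_mul, QuotientGroup.mk_inv, QuotientGroup.mk_pow, ht',
          show tbar ^ k = ((y : ↥Y) : ↥Y ⧸ Zy) from hk]
        exact mul_inv_cancel _
      exact (QuotientGroup.eq_one_iff (y * (t ^ k)⁻¹)).mp h2
    exact hmem
  -- eigenvector construction of a first extension ρ₀
  obtain ⟨μ, hμ⟩ := Module.End.exists_eigenvalue (V.ρ (↑t : G) : Module.End ℂ V)
  obtain ⟨v, hv⟩ := hμ.exists_hasEigenvector
  have hv0 : v ≠ 0 := hv.2
  have scal : ∀ y : ↥Y, ∃ c : ℂ, (V.ρ (↑y : G)) v = c • v := by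
    intro y
    obtain ⟨k, z, hz, rfl⟩ := hdecomp y
    have hcoe : (↑(z * t ^ k) : G) = (↑z : G) * (↑t : G) ^ k := by push_cast; rfl
    have h2 : (V.ρ ((↑t : G) ^ k)) v = μ ^ k • v := by
      rw [map_pow]
      exact hv.pow_apply k
    refine ⟨lam ⟨↑z, hz⟩ * μ ^ k, ?_⟩
    have h3 : V.ρ (↑(z * t ^ k) : G) v = (V.ρ (↑z : G)) ((V.ρ ((↑t : G) ^ k)) v) := by
      rw [hcoe, map_mul]
      rfl
    rw [h3, h2, map_smul, hcent ↑z hz]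
    rw [LinearMap.smul_apply, Module.End.one_apply, smul_smul, mul_comm]
  have uniq : ∀ c₁ c₂ : ℂ, c₁ • v = c₂ • v → c₁ = c₂ := fun c₁ c₂ h =>
    smul_left_injective ℂ hv0 h
  let ρ₀ : ↥Y →* ℂ :=
    { toFun := fun y => Classical.choose (scal y)
      map_one' := by
        apply uniq
        rw [← Classical.choose_spec (scal 1)]
        simp
      map_mul' := by
        intro a b
        apply uniq
        rw [← Classical.choose_spec (scal (a * b))]
        have ha := Classical.choose_spec (scal a)
        have hb := Classical.choose_spec (scal b)
        have hab' : V.ρ (↑(a * b) : G) v = (V.ρ (↑a : G)) ((V.ρ (↑b : G)) v) := by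
          rw [Subgroup.coe_mul, map_mul]
          rfl
        calc (V.ρ ((a * b : ↥Y) : G)) v = (V.ρ (↑a : G)) ((V.ρ (↑b : G)) v) := hab'
        _ = (V.ρ (↑a : G)) (Classical.choose (scal b) • v) := congrArg _ hb
        _ = Classical.choose (scal b) • ((V.ρ (↑a : G)) v) := map_smul _ _ _
        _ = Classical.choose (scal b) • (Classical.choose (scal a) • v) :=
              congrArg (fun w => Classical.choose (scal b) • w) ha
        _ = (Classical.choose (scal a) * Classical.choose (scal b)) • v := by
              rw [smul_smul, mul_comm (Classical.choose (scal b)) (Classical.choose (scal a))]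
      }
  have heig : ∀ y : ↥Y, (V.ρ (↑y : G)) v = ρ₀ y • v := fun y => Classical.choose_spec (scal y)
  have hPmv : Pm V ρ₀ v = v := by
    have hterm : ∀ y : ↥Y, ((ρ₀ y)⁻¹ • (V.ρ (↑y : G) : Module.End ℂ V)) v = v := by
      intro y
      rw [LinearMap.smul_apply, heig y, smul_smul, inv_mul_cancel₀ (mh_ne_zero ρ₀ y), one_smul]
    have h1 : Pm V ρ₀ v = (Fintype.card ↥Y : ℂ)⁻¹ •
        ∑ y : ↥Y, ((ρ₀ y)⁻¹ • (V.ρ (↑y : G) : Module.End ℂ V)) v := by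
      rw [Pm]
      simp only [LinearMap.smul_apply, LinearMap.coe_sum, Finset.sum_apply]
    have h2 : ∑ y : ↥Y, ((ρ₀ y)⁻¹ • (V.ρ (↑y : G) : Module.End ℂ V)) v
        = (Fintype.card ↥Y : ℕ) • v :=
      (Finset.sum_congr rfl (fun y _ => hterm y)).trans
        (by rw [Finset.sum_const, Finset.card_univ])
    rw [h1, h2, ← Nat.cast_smul_eq_nsmul ℂ, smul_smul, inv_mul_cancel₀, one_smul]
    exact_mod_cast Fintype.card_ne_zero
  have hρ₀S : ρ₀ ∈ Sset V Y := by
    intro h0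
    rw [h0] at hPmv
    exact hv0 (by simpa using hPmv.symm)
  have hρ₀L : ρ₀ ∈ L := hSL hρ₀S
  have hSfin : (Sset V Y).Finite := Sset_finite hY V ρ₀ hρ₀S
  -- L is finite with at most p elements
  have hval : ∀ ρ' ∈ L, ∀ (z : ↥Y) (hz : (↑z : G) ∈ Subgroup.center G), ρ' z = lam ⟨↑z, hz⟩ := by
    intro ρ' hρ' z hz
    have h1 := hρ' ↑z hz
    have h2 : (⟨↑z, hZY.le hz⟩ : ↥Y) = z := Subtype.ext rfl
    rw [h2] at h1
    exact h1
  have hinj : Set.InjOn (fun ρ' : ↥Y →* ℂ => ρ' t) L := by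
    intro ρ1 h1 ρ2 h2 heq
    ext y
    obtain ⟨k, z, hz, rfl⟩ := hdecomp y
    have e1 : ∀ ρ' ∈ L, ρ' (z * t ^ k) = lam ⟨↑z, hz⟩ * (ρ' t) ^ k := by
      intro ρ' hρ'
      rw [map_mul, map_pow, hval ρ' hρ' z hz]
    simp only at heq
    rw [e1 ρ1 h1, e1 ρ2 h2, heq]
  have hmaps : ∀ ρ' ∈ L, ρ' t ∈ {x : ℂ | x ^ p = lam ⟨↑(t ^ p), htp⟩} := by
    intro ρ' hρ'
    have hpw : (ρ' t) ^ p = ρ' (t ^ p) := (map_pow ρ' t p).symm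
    rw [Set.mem_setOf_eq, hpw]
    exact hval ρ' hρ' (t ^ p) htp
  have hRset : {x : ℂ | x ^ p = lam ⟨↑(t ^ p), htp⟩}
      = ↑(Polynomial.nthRoots p (lam ⟨↑(t ^ p), htp⟩)).toFinset := by
    ext x
    simp [Polynomial.mem_nthRoots hp.pos]
  have hRfin : {x : ℂ | x ^ p = lam ⟨↑(t ^ p), htp⟩}.Finite := by
    rw [hRset]
    exact (Polynomial.nthRoots p (lam ⟨↑(t ^ p), htp⟩)).toFinset.finite_toSet
  have hRcard : {x : ℂ | x ^ p = lam ⟨↑(t ^ p), htp⟩}.ncard ≤ p := by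
    rw [hRset, Set.ncard_coe_finset]
    exact le_trans (Multiset.toFinset_card_le _) (Polynomial.card_nthRoots p _)
  have hLfin : L.Finite := by
    have himg : ((fun ρ' : ↥Y →* ℂ => ρ' t) '' L).Finite := hRfin.subset (by
      rintro x ⟨ρ', hρ', rfl⟩
      exact hmaps ρ' hρ')
    exact Set.Finite.of_finite_image himg hinj
  have hLcard : L.ncard ≤ p := by
    calc L.ncard ≤ {x : ℂ | x ^ p = lam ⟨↑(t ^ p), htp⟩}.ncard :=
          Set.ncard_le_ncard_of_injOn _ hmaps hinj hRfin
    _ ≤ p := hRcard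
  -- the orbit structure
  letI act : MulAction G (↥Y →* ℂ) := conjSMul hY
  have hsmul : ∀ (g : G) (ρ : ↥Y →* ℂ), g • ρ = ρ.comp (conjMH hY g⁻¹) := fun _ _ => rfl
  have hSorb : Sset V Y = MulAction.orbit G ρ₀ := by
    apply Set.Subset.antisymm
    · intro σ hσ
      obtain ⟨g, hg⟩ := Sset_transitive hY V ρ₀ hρ₀S σ hσ
      refine ⟨g⁻¹, ?_⟩
      show g⁻¹ • ρ₀ = σ
      rw [hsmul, inv_inv]
      exact hg.symm
    · rintro σ ⟨g, rfl⟩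
      show ρ₀.comp (conjMH hY g⁻¹) ∈ Sset V Y
      exact Sset_conj hY V ρ₀ hρ₀S g⁻¹
  -- |S| = p
  have hScard : (Sset V Y).ncard = p := by
    have h1 : (Sset V Y).ncard = (MulAction.stabilizer G ρ₀).index := by
      rw [hSorb, ← MulAction.index_stabilizer]
    have hdvd : (Sset V Y).ncard ∣ Nat.card G := by
      rw [h1]
      exact Subgroup.index_dvd_card _
    obtain ⟨n, hn⟩ := IsPGroup.iff_card.mp hG
    rw [hn] at hdvd
    obtain ⟨k, hk, hkeq⟩ := (Nat.dvd_prime_pow hp).mp hdvd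
    have h3 : (Sset V Y).ncard ≤ p := le_trans (Set.ncard_le_ncard hSL hLfin) hLcard
    have h2 : 1 < (Sset V Y).ncard := by
      by_contra hle
      push_neg at hle
      have hallρ₀ : ∀ σ ∈ Sset V Y, σ = ρ₀ := by
        intro σ hσ
        by_contra hne
        have : 1 < (Sset V Y).ncard := (Set.one_lt_ncard hSfin).mpr ⟨σ, hσ, ρ₀, hρ₀S, hne⟩
        omega
      have hsingle : hSfin.toFinset = {ρ₀} := by
        ext σ
        simp only [Set.Finite.mem_toFinset, Finset.mem_singleton]
        constructor
        · exact hallρ₀ σ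
        · rintro rfl; exact hρ₀S
      have hres := resolution hY V ρ₀ hρ₀S hSfin
      rw [hsingle, Finset.sum_singleton] at hres
      -- every element of Y acts as a scalar
      have hscalar : ∀ y : ↥Y, (V.ρ (↑y : G) : Module.End ℂ V) = ρ₀ y • 1 := by
        intro y
        calc (V.ρ (↑y : G) : Module.End ℂ V) = (V.ρ (↑y : G) : Module.End ℂ V) * Pm V ρ₀ := by
              rw [hres, mul_one]
        _ = ρ₀ y • Pm V ρ₀ := rho_mul_Pm V ρ₀ y
        _ = ρ₀ y • 1 := by rw [hres]
      obtain ⟨y₀, hy₀Y, hy₀c⟩ := SetLike.exists_of_lt hZY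
      apply hy₀c
      rw [Subgroup.mem_center_iff]
      intro g
      set yy : ↥Y := ⟨y₀, hy₀Y⟩ with hyy
      set cc : ↥Y := conjMH hY g yy with hcc
      have hcceq : (↑cc : G) = g * y₀ * g⁻¹ := rfl
      have htr : χ (↑cc : G) = χ (↑yy : G) := by
        rw [← hchar, hcceq]
        exact FDRep.char_conj V y₀ g
      have htr2 : ρ₀ cc * ((Module.finrank ℂ V : ℕ) : ℂ)
          = ρ₀ yy * ((Module.finrank ℂ V : ℕ) : ℂ) := by
        have e1 : ∀ w : ↥Y, χ (↑w : G) = ρ₀ w * ((Module.finrank ℂ V : ℕ) : ℂ) := by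
          intro w
          rw [hχtr, hscalar w, map_smul, LinearMap.trace_one, smul_eq_mul]
        rw [← e1, ← e1, htr]
      have hρcc : ρ₀ cc = ρ₀ yy := mul_right_cancel₀ hd0 htr2
      have hone : (V.ρ ((↑cc : G) * (↑yy : G)⁻¹) : Module.End ℂ V) = 1 := by
        rw [map_mul, hscalar cc, hρcc, show ((↑yy : G)⁻¹) = (↑(yy⁻¹) : G) from rfl,
          hscalar yy⁻¹, smul_mul_smul_comm, one_mul, ← map_mul, mul_inv_cancel,
          map_one, one_smul]
      have hcy := hfaith _ hone
      have hccyy : (↑cc : G) = ↑yy := by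
        have := mul_inv_eq_one.mp hcy
        exact this
      rw [hcceq] at hccyy
      calc g * y₀ = (g * y₀ * g⁻¹) * g := by group
      _ = y₀ * g := by rw [hccyy]
    have hk1 : k = 1 := by
      rcases Nat.lt_or_ge k 1 with hlt | hge
      · exfalso
        interval_cases k
        rw [pow_zero] at hkeq
        omega
      rcases Nat.lt_or_ge k 2 with hlt2 | hge2
      · omega
      · exfalso
        have hple : p ^ 2 ≤ p ^ k := Nat.pow_le_pow_right hp.pos hge2
        have hpp : p < p ^ 2 := by
          have := hp.one_lt
          nlinarith
        omega
    rw [hkeq, hk1, pow_one]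
  have hSLeq : Sset V Y = L := by
    apply Set.eq_of_subset_of_ncard_le hSL ?_ hLfin
    rw [hScard]
    exact hLcard
  have hLcardp : L.ncard = p := by rw [← hSLeq, hScard]
  -- the character formula
  have hform : ∀ y : ↥Y, χ ↑y = χ 1 / (p : ℂ) * ∑ᶠ ρ ∈ L, ρ y := by
    have hres := resolution hY V ρ₀ hρ₀S hSfin
    have hm : ∀ σ ∈ hSfin.toFinset, LinearMap.trace ℂ V (Pm V σ)
        = LinearMap.trace ℂ V (Pm V ρ₀) := by
      intro σ hσ
      obtain ⟨g, hg⟩ := Sset_transitive hY V ρ₀ hρ₀S σ (hSfin.mem_toFinset.mp hσ)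
      have := trace_Pm_conj hY V ρ₀ g⁻¹
      rw [inv_inv] at this
      rw [hg, this]
    have hχy : ∀ y : ↥Y, χ ↑y
        = LinearMap.trace ℂ V (Pm V ρ₀) * ∑ σ ∈ hSfin.toFinset, σ y := by
      intro y
      have h1 : (V.ρ (↑y : G) : Module.End ℂ V) = ∑ σ ∈ hSfin.toFinset, σ y • Pm V σ := by
        conv_lhs => rw [← mul_one (V.ρ (↑y : G) : Module.End ℂ V), ← hres]
        rw [Finset.mul_sum]
        exact Finset.sum_congr rfl fun σ _ => rho_mul_Pm V σ y
      rw [hχtr, h1, map_sum]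
      have hsum : ∑ σ ∈ hSfin.toFinset, LinearMap.trace ℂ V (σ y • Pm V σ)
          = ∑ σ ∈ hSfin.toFinset, σ y * LinearMap.trace ℂ V (Pm V ρ₀) :=
        Finset.sum_congr rfl (fun σ hσ => by
          rw [LinearMap.map_smul, smul_eq_mul, hm σ hσ])
      rw [hsum, ← Finset.sum_mul, mul_comm]
    have hcardT : (hSfin.toFinset.card : ℂ) = (p : ℂ) := by
      rw [← Set.ncard_eq_toFinset_card _ hSfin, hScard]
    have hχ1' : χ 1 = LinearMap.trace ℂ V (Pm V ρ₀) * p := by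
      have := hχy 1
      rw [show ((↑(1 : ↥Y) : G)) = 1 from rfl] at this
      rw [this]
      congr 1
      rw [Finset.sum_congr rfl (fun σ _ => map_one σ), Finset.sum_const, nsmul_eq_mul, mul_one,
        hcardT]
    intro y
    have hfs : ∑ᶠ ρ ∈ L, ρ y = ∑ σ ∈ hSfin.toFinset, σ y := by
      rw [← hSLeq]
      exact finsum_mem_eq_finite_toFinset_sum _ hSfin
    rw [hfs, hχy y, hχ1']
    field_simp
  refine ⟨hLcardp, ?_, ?_, hform⟩
  · -- closure of L under conjugation
    intro ρ hρ g
    refine ⟨ρ.comp (conjMH hY g), ?_, fun y => rfl⟩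
    intro z hz
    have h2 : conjMH hY g ⟨z, hZY.le hz⟩ = ⟨z, hZY.le hz⟩ := by
      ext
      show g * z * g⁻¹ = z
      rw [Subgroup.mem_center_iff.mp hz g, mul_inv_cancel_right]
    show ρ (conjMH hY g ⟨z, hZY.le hz⟩) = lam ⟨z, hz⟩
    rw [h2]
    exact hρ z hz
  · -- transitivity
    intro ρ hρ σ hσ
    obtain ⟨g1, hg1⟩ := Sset_transitive hY V ρ₀ hρ₀S ρ (hSLeq ▸ hρ)
    obtain ⟨g2, hg2⟩ := Sset_transitive hY V ρ₀ hρ₀S σ (hSLeq ▸ hσ)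
    refine ⟨g1⁻¹ * g2, fun y => ?_⟩
    rw [hg1, hg2]
    show ρ₀ (conjMH hY g2 y)
      = ρ₀ (conjMH hY g1 ⟨(g1⁻¹ * g2) * ↑y * (g1⁻¹ * g2)⁻¹, hY.conj_mem ↑y y.2 _⟩)
    congr 1
    ext
    show g2 * ↑y * g2⁻¹ = g1 * ((g1⁻¹ * g2) * ↑y * (g1⁻¹ * g2)⁻¹) * g1⁻¹
    group
end

section
/- Let p be a prime and H a finite p-group. Let Y ≤ Z(H) be a central subgroup and U a normal subgroup of H with Y < U and |U : Y| = p. Let φ be a linear character of Y, and let θ and θ' be irreducible complex characters of H whose restrictions to Y equal θ(1)·φ and θ'(1)·φ respectively. If U ≤ Z(θ), then U ≤ Z(θ'); consequently, in that case the restriction of θ' to U equals θ'(1)·ν for some linear character ν of U extending φ. -/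
open scoped ComplexOrder

open CategoryTheory

lemma aux_scalar {G : Type} [Group G] (V : FDRep ℂ G) [Simple V]
    (T : V →ₗ[ℂ] V) (hT : ∀ g : G, T ∘ₗ (V.ρ g) = (V.ρ g) ∘ₗ T) :
    ∃ c : ℂ, T = c • (LinearMap.id : V →ₗ[ℂ] V) := by
  let f : V ⟶ V := ⟨FGModuleCat.ofHom T, fun g => by ext v; exact congrFun (congrArg (fun m => m.toFun) (hT g)) v⟩
  obtain ⟨c, hc⟩ := endomorphism_simple_eq_smul_id ℂ f
  exact ⟨c, (congrArg (fun m => m.hom.hom.hom) hc).symm⟩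

lemma aux_rank_ne {G : Type} [Group G] (V : FDRep ℂ G) [Simple V] :
    ((Module.finrank ℂ V : ℂ)) ≠ 0 := by
  norm_cast
  intro h
  have hs : Subsingleton V := (Module.finrank_zero_iff (R := ℂ) (M := V)).mp h
  exact CategoryTheory.id_nonzero V (by
    apply Action.hom_ext
    ext v
    exact hs.elim _ _)

lemma aux_char_one_ne {G : Type} [Group G] (V : FDRep ℂ G) [Simple V] :
    V.character 1 ≠ 0 := by
  rw [FDRep.char_one]; exact aux_rank_ne V

lemma aux_smul_inj {G : Type} [Group G] (V : FDRep ℂ G) [Simple V] {c c' : ℂ}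
    (h : c • (LinearMap.id : V →ₗ[ℂ] V) = c' • LinearMap.id) : c = c' := by
  have h2 := congrArg (LinearMap.trace ℂ V) h
  rw [map_smul, map_smul, LinearMap.trace_id, smul_eq_mul, smul_eq_mul] at h2
  exact mul_right_cancel₀ (aux_rank_ne V) h2

lemma aux_scalar_val {G : Type} [Group G] [Fintype G] (V : FDRep ℂ G) [Simple V] (g : G)
    (hcomm : ∀ h : G, (V.ρ g) ∘ₗ (V.ρ h) = (V.ρ h) ∘ₗ (V.ρ g)) :
    ∃ c : ℂ, ‖c‖ = 1 ∧ V.ρ g = c • (LinearMap.id : V →ₗ[ℂ] V) ∧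
      V.character g = c * V.character 1 := by
  obtain ⟨c, hc⟩ := aux_scalar V (V.ρ g) hcomm
  have hd := aux_rank_ne V
  have htr : V.character g = c * V.character 1 := by
    rw [FDRep.character, hc, FDRep.char_one, map_smul, LinearMap.trace_id]
    simp [smul_eq_mul]
  have hn : c ^ Fintype.card G = 1 := by
    have h1 : (V.ρ g) ^ Fintype.card G = 1 := by
      rw [← map_pow, pow_card_eq_one, map_one]
    rw [hc, smul_pow] at h1
    have hid : (LinearMap.id : V →ₗ[ℂ] V) ^ Fintype.card G = LinearMap.id := by
      rw [Module.End.id_pow]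
    rw [hid] at h1
    have h2 := congrArg (LinearMap.trace ℂ V) h1
    rw [map_smul, LinearMap.trace_id, LinearMap.trace_one] at h2

    rw [smul_eq_mul] at h2
    exact mul_right_cancel₀ hd (by rw [h2, one_mul])
  have hnpos : Fintype.card G ≠ 0 := Fintype.card_ne_zero
  have habs : ‖c‖ = 1 := by
    have h3 : ‖c‖ ^ Fintype.card G = 1 := by rw [← norm_pow, hn, norm_one]
    have h4 : (0:ℝ) ≤ ‖c‖ := norm_nonneg c
    rcases lt_trichotomy (‖c‖) 1 with h | h | h
    · exact absurd h3 (by have := pow_lt_one₀ h4 h hnpos; linarith)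
    · exact h
    · exact absurd h3 (by have := one_lt_pow₀ h hnpos; linarith)
  exact ⟨c, habs, hc, htr⟩

lemma aux_comm {p : ℕ} (hp : p.Prime) {H : Type} [Group H] [Fintype H]
    (hH : IsPGroup p H) (Y U : Subgroup H) [hYn : Y.Normal]
    (hU : U.Normal) (hYU : Y ≤ U) (hidx : Y.relIndex U = p) :
    ∀ (h u : H), u ∈ U → h * u * h⁻¹ * u⁻¹ ∈ Y := by
  haveI : Fact p.Prime := ⟨hp⟩
  set U' : Subgroup (H ⧸ Y) := U.map (QuotientGroup.mk' Y) with hU'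
  haveI : U'.Normal := hU.map _ (QuotientGroup.mk'_surjective Y)
  have hcard : Nat.card ↥U' = p := by
    set f := (QuotientGroup.mk' Y).comp U.subtype with hf
    have hker : f.ker = Y.subgroupOf U := by
      ext u
      simp [hf, MonoidHom.mem_ker, QuotientGroup.eq_one_iff, Subgroup.mem_subgroupOf]
    have hrange : f.range = U' := by
      rw [hf, MonoidHom.range_comp, Subgroup.range_subtype]
    have := Nat.card_congr (QuotientGroup.quotientKerEquivRange f).toEquiv
    rw [hker, hrange] at this
    rw [← this]
    exact hidx ▸ rfl
  have instPG : IsPGroup p (ConjAct (H ⧸ Y)) :=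
    (hH.to_quotient Y).of_equiv ConjAct.toConjAct
  set F := MulAction.fixedPoints (ConjAct (H ⧸ Y)) ↥U' with hFdef
  have hmod := instPG.card_modEq_card_fixedPoints ↥U'
  have hone : (1 : ↥U') ∈ F := fun g => smul_one g
  haveI : Nonempty ↥F := ⟨⟨1, hone⟩⟩
  have hle : Nat.card ↥F ≤ Nat.card ↥U' := by
    rw [Nat.card_coe_set_eq, ← Set.ncard_univ]
    exact Set.ncard_le_ncard (Set.subset_univ F) (Set.finite_univ)
  have hdvd : p ∣ Nat.card ↥F := by
    have : Nat.card ↥F ≡ 0 [MOD p] := by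
      calc Nat.card ↥F ≡ Nat.card ↥U' [MOD p] := hmod.symm
      _ ≡ 0 [MOD p] := by rw [hcard]; exact (Nat.modEq_zero_iff_dvd).mpr dvd_rfl
    exact (Nat.modEq_zero_iff_dvd).mp this
  have hpos : 0 < Nat.card ↥F := Nat.card_pos
  have hFcard : Nat.card ↥F = p := le_antisymm (hcard ▸ hle) (Nat.le_of_dvd hpos hdvd)
  have hFuniv : F = Set.univ := by
    apply Set.eq_of_subset_of_ncard_le (Set.subset_univ F)
    rw [Set.ncard_univ, hcard, ← hFcard, Nat.card_coe_set_eq]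
  intro h u hu
  have hmem : (⟨QuotientGroup.mk u, ⟨u, hu, rfl⟩⟩ : ↥U') ∈ F := by
    rw [hFuniv]; trivial
  have h1 := hmem (ConjAct.toConjAct (QuotientGroup.mk h : H ⧸ Y))
  have h2 := congrArg Subtype.val h1
  rw [ConjAct.Subgroup.val_conj_smul, ConjAct.toConjAct_smul] at h2
  have h3 : (QuotientGroup.mk (h * u * h⁻¹) : H ⧸ Y) = QuotientGroup.mk u := by
    simpa using h2
  have h4 : u⁻¹ * (h * u * h⁻¹) ∈ Y := QuotientGroup.eq.mp h3.symm
  have h6 := hYn.conj_mem _ h4 u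
  have h5 : h * u * h⁻¹ * u⁻¹ = u * (u⁻¹ * (h * u * h⁻¹)) * u⁻¹ := by group
  rw [h5]
  exact h6

/-- Claim 3.4: with Y central in H, U ⊴ H, Y < U of index p, and θ, θ'
irreducible characters of H lying over the linear character φ of Y: if
U ≤ Z(θ) then U ≤ Z(θ'), and then θ' restricted to U is θ'(1)·ν for some linear
character ν of U extending φ. -/
theorem stmt15 {p : ℕ} (hp : p.Prime) (H : Type) [Group H] [Fintype H]
    (hH : IsPGroup p H) (Y U : Subgroup H)
    (hYc : Y ≤ Subgroup.center H) (hU : U.Normal) (hYU : Y < U)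
    (hidx : Y.relIndex U = p)
    (φ : ↥Y →* ℂ)
    (θ θ' : H → ℂ) (hθ : IsIrrChar H θ) (hθ' : IsIrrChar H θ')
    (hres : ∀ y : ↥Y, θ ↑y = θ 1 * φ y)
    (hres' : ∀ y : ↥Y, θ' ↑y = θ' 1 * φ y)
    (hUZ : (U : Set H) ⊆ charCenter H θ) :
    (U : Set H) ⊆ charCenter H θ' ∧
    ∃ ν : ↥U →* ℂ, (∀ (y : H) (hy : y ∈ Y), ν ⟨y, hYU.le hy⟩ = φ ⟨y, hy⟩) ∧
      ∀ u : ↥U, θ' ↑u = θ' 1 * ν u := by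
  obtain ⟨V, hVs, hVc⟩ := hθ
  obtain ⟨W, hWs, hWc⟩ := hθ'
  haveI := hVs; haveI := hWs
  subst hVc; subst hWc
  haveI hYn : Y.Normal := ⟨fun y hy g => by
    have h1 := (Subgroup.mem_center_iff.mp (hYc hy)) g
    have h2 : g * y * g⁻¹ = y := by rw [h1]; group
    rw [h2]; exact hy⟩
  have hcomm := aux_comm hp hH Y U hU hYU.le hidx
  -- central elements act as scalars given by φ
  have hcen : ∀ (X : FDRep ℂ H) (_ : Simple X) (_ : ∀ y : ↥Y, X.character ↑y =
      X.character 1 * φ y) (y : ↥Y), X.ρ ↑y = (φ y) • (LinearMap.id : X →ₗ[ℂ] X) := by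
    intro X hXs hXres y
    haveI := hXs
    obtain ⟨c, habs, hρ, hch⟩ := aux_scalar_val X ↑y (fun h => by
      have hcy := (Subgroup.mem_center_iff.mp (hYc y.2)) h
      rw [← Module.End.mul_eq_comp, ← Module.End.mul_eq_comp, ← map_mul, ← map_mul, hcy])
    have hch' := hXres y
    have hceq : c = φ y := by
      rw [hch] at hch'
      rw [mul_comm (X.character 1) (φ y)] at hch'
      exact mul_right_cancel₀ (aux_char_one_ne X) hch'
    rw [hρ, hceq]
  have hVY := hcen V hVs hres
  have hWY := hcen W hWs hres'
  -- φ kills the commutators [h, u]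
  have hphi1 : ∀ (h u : H) (hu : u ∈ U), φ ⟨h * u * h⁻¹ * u⁻¹, hcomm h u hu⟩ = 1 := by
    intro h u hu
    set y : ↥Y := ⟨h * u * h⁻¹ * u⁻¹, hcomm h u hu⟩ with hy
    have hprod : h * u * h⁻¹ = ↑y * u := by rw [hy]; group
    have e1 : V.character (h * u * h⁻¹) = V.character u := FDRep.char_conj V u h
    have e2 : V.character (↑y * u) = φ y * V.character u := by
      rw [FDRep.character, FDRep.character, map_mul, hVY y, smul_mul_assoc,
        ← Module.End.one_eq_id, one_mul, map_smul, smul_eq_mul]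
    have hne : V.character u ≠ 0 := by
      intro h0
      have h7 : (↑‖V.character u‖ : ℂ) = V.character 1 := hUZ hu
      rw [h0] at h7
      simp at h7
      exact aux_rank_ne V h7.symm
    have heq : φ y * V.character u = V.character u := by rw [← e2, ← hprod, e1]
    exact mul_right_cancel₀ hne (by rw [heq, one_mul])
  -- ρ'(u) commutes with everything
  have hWcomm : ∀ (u : H) (hu : u ∈ U) (h : H),
      (W.ρ u) ∘ₗ (W.ρ h) = (W.ρ h) ∘ₗ (W.ρ u) := by
    intro u hu h
    set y : ↥Y := ⟨h * u * h⁻¹ * u⁻¹, hcomm h u hu⟩ with hy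
    have hprod : h * u = ↑y * u * h := by rw [hy]; group
    have hkey : W.ρ (h * u) = W.ρ (u * h) := by
      rw [hprod, map_mul, map_mul, hWY y, hphi1 h u hu, one_smul,
        ← Module.End.one_eq_id, one_mul, ← map_mul]
    rw [← Module.End.mul_eq_comp, ← Module.End.mul_eq_comp, ← map_mul, ← map_mul, hkey]
  have hd := aux_char_one_ne W
  -- scalars on U
  have hscal : ∀ u : ↥U, ‖W.character ↑u‖ = ‖W.character 1‖ ∧
      W.ρ ↑u = (W.character ↑u / W.character 1) • (LinearMap.id : W →ₗ[ℂ] W) := by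
    intro u
    obtain ⟨c, habs, hρ, hch⟩ := aux_scalar_val W ↑u (hWcomm ↑u u.2)
    have hcval : c = W.character ↑u / W.character 1 := by
      rw [hch, mul_div_assoc, div_self hd, mul_one]
    constructor
    · rw [hch, norm_mul, habs, one_mul]
    · rw [hρ, hcval]
  have hch1 : ((‖W.character 1‖ : ℝ) : ℂ) = W.character 1 := by
    rw [FDRep.char_one]
    norm_num [Complex.norm_natCast]
  refine ⟨?_, ?_⟩
  · intro x hx
    have hsc := (hscal ⟨x, hx⟩).1
    show ((‖W.character x‖ : ℝ) : ℂ) = W.character 1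
    rw [show x = ((⟨x, hx⟩ : ↥U) : H) from rfl, hsc, hch1]
  · refine ⟨⟨⟨fun u : ↥U => W.character ↑u / W.character 1, ?_⟩, ?_⟩, ?_, ?_⟩
    · show W.character ↑(1 : ↥U) / W.character 1 = 1
      rw [OneMemClass.coe_one, div_self hd]
    · intro a b
      show W.character ↑(a * b) / W.character 1 =
        (W.character ↑a / W.character 1) * (W.character ↑b / W.character 1)
      have ha := (hscal a).2
      have hb := (hscal b).2
      have hab := (hscal (a * b)).2
      have h1 : W.ρ ↑(a * b) = ((W.character ↑a / W.character 1) *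
          (W.character ↑b / W.character 1)) • (LinearMap.id : W →ₗ[ℂ] W) := by
        rw [Subgroup.coe_mul, map_mul, ha, hb, smul_mul_assoc, mul_smul_comm, smul_smul,
          ← Module.End.one_eq_id, one_mul]
      exact aux_smul_inj W (hab.symm.trans h1)
    · intro y hy
      show W.character ↑((⟨y, hYU.le hy⟩ : ↥U)) / W.character 1 = φ ⟨y, hy⟩
      have h8 := hres' ⟨y, hy⟩
      rw [show ((⟨y, hYU.le hy⟩ : ↥U) : H) = ((⟨y, hy⟩ : ↥Y) : H) from rfl, h8,
        mul_comm, mul_div_assoc, div_self hd, mul_one]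
    · intro u
      show W.character ↑u = W.character 1 * (W.character ↑u / W.character 1)
      rw [mul_comm, div_mul_cancel₀ _ hd]
end

section
/- Let G be a finite group such that the index |G : Z(G)| is not a perfect square. Then no irreducible complex character χ of G vanishes on all of G \ Z(G); that is, for every irreducible character χ of G there exists g ∈ G with g ∉ Z(G) and χ(g) ≠ 0. -/
open scoped ComplexOrder

open CategoryTheory Module

lemma central_scalar {G : Type} [Group G] (V : FDRep ℂ G) [Simple V]
    {z : G} (hz : z ∈ Subgroup.center G) :
    ∃ c : ℂ, V.ρ z = c • LinearMap.id := by
  let f : V ⟶ V := ⟨FGModuleCat.ofHom (V.ρ z), by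
    intro g
    ext x
    show (V.ρ z * V.ρ g) x = (V.ρ g * V.ρ z) x
    rw [← map_mul, ← map_mul, hz.comm]⟩
  obtain ⟨c, hc⟩ := endomorphism_simple_eq_smul_id ℂ f
  refine ⟨c, ?_⟩
  have : (c • 𝟙 V : V ⟶ V).hom.hom.hom = f.hom.hom.hom := by rw [hc]
  exact this.symm.trans (by ext x; rfl)

lemma central_char {G : Type} [Group G] (V : FDRep ℂ G) [Simple V]
    {z : G} (hz : z ∈ Subgroup.center G) :
    V.character z * V.character z⁻¹ = (finrank ℂ V : ℂ) * (finrank ℂ V : ℂ) := by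
  obtain ⟨c, hc⟩ := central_scalar V hz
  obtain ⟨c', hc'⟩ := central_scalar V (inv_mem hz)
  have h1 : V.ρ z * V.ρ z⁻¹ = LinearMap.id := by
    rw [← map_mul, mul_inv_cancel, map_one]; rfl
  have h2 : c * c' * (finrank ℂ V : ℂ) = (finrank ℂ V : ℂ) := by
    have e := congrArg (LinearMap.trace ℂ V) h1
    rw [hc, hc', smul_mul_assoc, mul_smul_comm, smul_smul] at e
    have hid : (LinearMap.id * LinearMap.id : V →ₗ[ℂ] V) = LinearMap.id := rfl
    rw [hid, map_smul, LinearMap.trace_id, smul_eq_mul] at e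
    simpa [map_smul, LinearMap.trace_id, smul_eq_mul] using e
  show LinearMap.trace ℂ V (V.ρ z) * LinearMap.trace ℂ V (V.ρ z⁻¹) = _
  rw [hc, hc', map_smul, map_smul, LinearMap.trace_id, smul_eq_mul, smul_eq_mul]
  linear_combination (finrank ℂ V : ℂ) * h2

/-- If |G : Z(G)| is not a perfect square, then no irreducible character of G
vanishes identically outside the center. -/
theorem stmt17 (G : Type) [Group G] [Fintype G]
    (h : ¬ IsSquare (Subgroup.center G).index) :
    ∀ χ : G → ℂ, IsIrrChar G χ → ∃ g : G, g ∉ Subgroup.center G ∧ χ g ≠ 0 := by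
  classical
  intro χ hχ
  by_contra hcon
  push_neg at hcon
  obtain ⟨V, hS, rfl⟩ := hχ
  haveI := hS
  haveI : Invertible ((Fintype.card G : ℂ)) :=
    invertibleOfNonzero (Nat.cast_ne_zero.mpr Fintype.card_ne_zero)
  haveI : Invertible ((Nat.card G : ℂ)) :=
    invertibleOfNonzero (Nat.cast_ne_zero.mpr Nat.card_pos.ne')
  have horth := FDRep.char_orthonormal (k := ℂ) (G := G) V V
  rw [if_pos ⟨Iso.refl V⟩] at horth
  rw [Nat.card_eq_fintype_card] at horth
  have hsum : ∑ g : G, V.character g * V.character g⁻¹ = (Fintype.card G : ℂ) := by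
    rw [inv_mul_eq_one₀ (Nat.cast_ne_zero.mpr Fintype.card_ne_zero)] at horth
    exact horth.symm
  set n := finrank ℂ V with hn
  have hterm : ∀ g : G, V.character g * V.character g⁻¹
      = if g ∈ Subgroup.center G then (n : ℂ) * n else 0 := by
    intro g
    by_cases hg : g ∈ Subgroup.center G
    · rw [if_pos hg]; exact central_char V hg
    · rw [if_neg hg, hcon g hg, zero_mul]
  have hsum2 : ∑ g : G, V.character g * V.character g⁻¹
      = (Fintype.card (Subgroup.center G) : ℂ) * ((n : ℂ) * n) := by
    rw [Finset.sum_congr rfl (fun g _ => hterm g), ← Finset.sum_filter,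
      Finset.sum_const, nsmul_eq_mul]
    congr 1
    simp [Fintype.card_subtype]
  have hcard : Fintype.card G = Fintype.card (Subgroup.center G) * (n * n) := by
    have := hsum.symm.trans hsum2
    exact_mod_cast this
  apply h
  refine ⟨n, ?_⟩
  have hi := Subgroup.index_mul_card (Subgroup.center G)
  have key : (Subgroup.center G).index * Nat.card (Subgroup.center G)
      = (n * n) * Nat.card (Subgroup.center G) := by
    rw [hi, Nat.card_eq_fintype_card, Nat.card_eq_fintype_card, hcard, mul_comm]
  exact Nat.eq_of_mul_eq_mul_right Nat.card_pos key
end
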